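/- arXiv:0709.4339 — 5 statements merged into one kernel-verified Lean document; each statement's English description precedes it below -/
import Mathlib

section
/- Let 0 < p < ∞, 0 < q < ∞ and let f : ℝ → ℂ be measurable with compact support. Then lim_{t→0⁺} t^{-1/p} ‖ (D_t f)~ ‖_{L^{p,q}(𝕋)} = ‖f‖_{L^{p,q}(ℝ)}, where (D_t f)~(x) = Σ_{k∈ℤ} f(t⁻¹(x+k)) is the periodization of the dilation D_t f. -/
open MeasureTheory Filter Set
open scoped ENNReal NNReal Topology

noncomputable def distrib {α : Type*} [MeasurableSpace α] (μ : Measure α)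
    (f : α → ℂ) (l : ℝ) : ℝ≥0∞ := μ {x | l < ‖f x‖}

noncomputable def rearr {α : Type*} [MeasurableSpace α] (μ : Measure α)
    (f : α → ℂ) (t : ℝ) : ℝ≥0∞ :=
  ⨅ (l : ℝ≥0) (_ : distrib μ f l ≤ ENNReal.ofReal t), (l : ℝ≥0∞)

noncomputable def lorentzNorm {α : Type*} [MeasurableSpace α] (μ : Measure α)
    (f : α → ℂ) (p q : ℝ≥0∞) : ℝ≥0∞ :=
  if q = ∞ then ⨆ t ∈ Set.Ioi (0:ℝ), ENNReal.ofReal (t ^ p.toReal⁻¹) * rearr μ f t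
  else (ENNReal.ofReal (q.toReal / p.toReal) *
      ∫⁻ t in Set.Ioi (0:ℝ),
        (ENNReal.ofReal (t ^ p.toReal⁻¹) * rearr μ f t) ^ q.toReal / ENNReal.ofReal t)
      ^ q.toReal⁻¹

noncomputable def torusMeasure : Measure ℝ := volume.restrict (Set.Ico (-(1/2) : ℝ) (1/2))

lemma lint_scale {t : ℝ} (ht : 0 < t) (F : ℝ → ℝ≥0∞) :
    ∫⁻ s in Ioi (0:ℝ), F s = ENNReal.ofReal t * ∫⁻ u in Ioi (0:ℝ), F (t * u) := by
  have hemb : MeasurableEmbedding (fun x : ℝ => t * x) := by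
    have := (Homeomorph.mulLeft₀ t ht.ne').toMeasurableEquiv.measurableEmbedding
    simpa [Homeomorph.coe_mulLeft₀] using this
  have hpre : (fun x : ℝ => t * x) ⁻¹' Ioi 0 = Ioi 0 := by
    ext x; simp [mem_Ioi, mul_pos_iff, ht, ht.not_gt, not_lt.mpr ht.le]
  have hmap : Measure.map (fun x : ℝ => t * x) (volume.restrict (Ioi 0))
      = (ENNReal.ofReal t⁻¹) • volume.restrict (Ioi 0) := by
    rw [← hpre, ← hemb.restrict_map, Real.map_volume_mul_left ht.ne', hpre,
      Measure.restrict_smul, abs_of_pos (inv_pos.mpr ht)]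
  have h1 : ∫⁻ u in Ioi (0:ℝ), F (t * u) = ENNReal.ofReal t⁻¹ * ∫⁻ s in Ioi (0:ℝ), F s := by
    rw [← hemb.lintegral_map, hmap, lintegral_smul_measure, smul_eq_mul]
  rw [h1, ← mul_assoc, ← ENNReal.ofReal_mul ht.le, mul_inv_cancel₀ ht.ne',
    ENNReal.ofReal_one, one_mul]

lemma key_rearr (f : ℝ → ℂ) {R t : ℝ} (hR0 : 0 < R)
    (hR : Function.support f ⊆ Metric.closedBall 0 R)
    (ht : 0 < t) (htR : t * R < 1/2) (s : ℝ) :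
    rearr torusMeasure (fun x => ∑' k : ℤ, f (t⁻¹ * (x + k))) s = rearr volume f (s / t) := by
  have fzero : ∀ y : ℝ, R < |y| → f y = 0 := by
    intro y hy
    by_contra h
    have := hR h
    rw [Metric.mem_closedBall, Real.dist_eq, sub_zero] at this
    linarith
  have hRt : R < t⁻¹ * (1/2) := by
    rw [inv_mul_eq_div, lt_div_iff₀ ht]
    linarith [htR]
  have hterm : ∀ x : ℝ, (1/2:ℝ) ≤ |x| → f (t⁻¹ * x) = 0 := by
    intro x hx
    apply fzero
    rw [abs_mul, abs_of_pos (inv_pos.mpr ht)]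
    calc R < t⁻¹ * (1/2) := hRt
    _ ≤ t⁻¹ * |x| := mul_le_mul_of_nonneg_left hx (inv_pos.mpr ht).le
  have gx : ∀ x : ℝ, |x| < 1/2 → (∑' k : ℤ, f (t⁻¹ * (x + k))) = f (t⁻¹ * x) := by
    intro x hx
    rw [tsum_eq_single (0 : ℤ) ?_]
    · norm_num
    · intro k hk
      apply hterm
      have h1 : (1:ℝ) ≤ |(k:ℝ)| := by
        rw [← Int.cast_abs]
        exact_mod_cast Int.one_le_abs hk
      have h2 : |(k:ℝ)| ≤ |x + k| + |x| := by
        have : |(k:ℝ)| = |(x + k) - x| := by congr 1; ring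
        rw [this]
        exact abs_sub _ _
      linarith
  have gzero : (∑' k : ℤ, f (t⁻¹ * ((-(1/2):ℝ) + k))) = 0 := by
    have h0 : ∀ k : ℤ, f (t⁻¹ * ((-(1/2):ℝ) + k)) = 0 := by
      intro k
      apply hterm
      rcases le_or_gt k 0 with h | h
      · have : (k:ℝ) ≤ 0 := by exact_mod_cast h
        rw [le_abs]; right; linarith
      · have : (1:ℝ) ≤ (k:ℝ) := by exact_mod_cast h
        rw [le_abs]; left; linarith
    rw [tsum_congr h0, tsum_zero]
  have setE : ∀ l : ℝ≥0,
      {x : ℝ | (l:ℝ) < ‖(fun x => ∑' k : ℤ, f (t⁻¹ * (x + k))) x‖}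
        ∩ Ico (-(1/2) : ℝ) (1/2)
      = (fun x : ℝ => t⁻¹ * x) ⁻¹' {y : ℝ | (l:ℝ) < ‖f y‖} := by
    intro l
    ext x
    simp only [mem_inter_iff, mem_setOf_eq, mem_Ico, mem_preimage]
    constructor
    · rintro ⟨hx, hx1, hx2⟩
      rcases eq_or_lt_of_le hx1 with rfl | hlt
      · rw [gzero] at hx
        simp at hx
      · rwa [gx x (abs_lt.mpr ⟨by linarith, hx2⟩)] at hx
    · intro hx
      have hne : f (t⁻¹ * x) ≠ 0 := by
        intro h
        rw [h] at hx
        simp at hx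
      have hxR : |t⁻¹ * x| ≤ R := by
        have := hR hne
        rwa [Metric.mem_closedBall, Real.dist_eq, sub_zero] at this
      have hxs : |x| < 1/2 := by
        by_contra h
        push_neg at h
        have : R < |t⁻¹ * x| := by
          rw [abs_mul, abs_of_pos (inv_pos.mpr ht)]
          calc R < t⁻¹ * (1/2) := hRt
          _ ≤ t⁻¹ * |x| := mul_le_mul_of_nonneg_left h (inv_pos.mpr ht).le
        linarith
      rw [abs_lt] at hxs
      exact ⟨by rw [gx x (abs_lt.mpr hxs)]; exact hx, hxs.1.le, hxs.2⟩
  have distribE : ∀ l : ℝ≥0,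
      distrib torusMeasure (fun x => ∑' k : ℤ, f (t⁻¹ * (x + k))) (l:ℝ)
        = ENNReal.ofReal t * distrib volume f (l:ℝ) := by
    intro l
    unfold distrib torusMeasure
    rw [Measure.restrict_apply' measurableSet_Ico, setE l]
    have : (fun x : ℝ => t⁻¹ * x) ⁻¹' {y : ℝ | (l:ℝ) < ‖f y‖}
        = (t⁻¹ * ·) ⁻¹' {y : ℝ | (l:ℝ) < ‖f y‖} := rfl
    rw [this, Real.volume_preimage_mul_left (inv_ne_zero ht.ne'),
      inv_inv, abs_of_pos ht]
  unfold rearr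
  refine iInf_congr fun l => ?_
  refine iInf_congr_Prop ?_ fun _ => rfl
  rw [distribE l, ENNReal.ofReal_div_of_pos ht,
    ENNReal.le_div_iff_mul_le (Or.inl (by simp [ht])) (Or.inl ENNReal.ofReal_ne_top),
    mul_comm]

lemma key_norm (p q : ℝ) (hp : 0 < p) (hq : 0 < q) (f : ℝ → ℂ)
    {R t : ℝ} (hR0 : 0 < R) (hR : Function.support f ⊆ Metric.closedBall 0 R)
    (ht : 0 < t) (htR : t * R < 1/2) :
    ENNReal.ofReal (t ^ (-(1/p))) *
        lorentzNorm torusMeasure (fun x => ∑' k : ℤ, f (t⁻¹ * (x + k)))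
          (ENNReal.ofReal p) (ENNReal.ofReal q)
      = lorentzNorm volume f (ENNReal.ofReal p) (ENNReal.ofReal q) := by
  have hP : (ENNReal.ofReal p).toReal = p := ENNReal.toReal_ofReal hp.le
  have hQ : (ENNReal.ofReal q).toReal = q := ENNReal.toReal_ofReal hq.le
  have hoft0 : ENNReal.ofReal t ≠ 0 := by simp [ht]
  unfold lorentzNorm
  rw [if_neg ENNReal.ofReal_ne_top, if_neg ENNReal.ofReal_ne_top, hP, hQ]
  simp only [key_rearr f hR0 hR ht htR]
  rw [lint_scale ht
    (fun s => (ENNReal.ofReal (s ^ p⁻¹) * rearr volume f (s / t)) ^ q / ENNReal.ofReal s)]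
  set K : ℝ≥0∞ := ENNReal.ofReal (t ^ (p⁻¹ * q)) / ENNReal.ofReal t with hK
  set I : ℝ≥0∞ := ∫⁻ u in Ioi (0:ℝ),
      (ENNReal.ofReal (u ^ p⁻¹) * rearr volume f u) ^ q / ENNReal.ofReal u with hI
  have hcong : ∫⁻ u in Ioi (0:ℝ),
      (ENNReal.ofReal ((t * u) ^ p⁻¹) * rearr volume f (t * u / t)) ^ q /
        ENNReal.ofReal (t * u)
      = ∫⁻ u in Ioi (0:ℝ),
        K * ((ENNReal.ofReal (u ^ p⁻¹) * rearr volume f u) ^ q / ENNReal.ofReal u) := by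
    refine setLIntegral_congr_fun measurableSet_Ioi (fun u hu => ?_)
    have hu : (0:ℝ) < u := hu
    rw [mul_div_cancel_left₀ _ ht.ne', Real.mul_rpow ht.le hu.le,
      ENNReal.ofReal_mul (Real.rpow_nonneg ht.le _), mul_assoc,
      ENNReal.mul_rpow_of_nonneg _ _ hq.le,
      ENNReal.ofReal_rpow_of_pos (Real.rpow_pos_of_pos ht _),
      ← Real.rpow_mul ht.le, ENNReal.ofReal_mul ht.le, hK, div_eq_mul_inv, div_eq_mul_inv,
      div_eq_mul_inv, ENNReal.mul_inv (Or.inl hoft0) (Or.inl ENNReal.ofReal_ne_top)]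
    ring
  have Kne : K ≠ ∞ := (ENNReal.div_lt_top ENNReal.ofReal_ne_top hoft0).ne
  rw [hcong, lintegral_const_mul' K _ Kne, ← hI, ← mul_assoc (ENNReal.ofReal t) K I,
    hK, ENNReal.mul_div_cancel hoft0 ENNReal.ofReal_ne_top,
    mul_left_comm (ENNReal.ofReal (q / p)), ENNReal.mul_rpow_of_nonneg _ _ (by positivity : (0:ℝ) ≤ q⁻¹),
    ENNReal.ofReal_rpow_of_pos (Real.rpow_pos_of_pos ht _), ← Real.rpow_mul ht.le,
    mul_inv_cancel_right₀ hq.ne' p⁻¹, ← mul_assoc,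
    ← ENNReal.ofReal_mul (Real.rpow_nonneg ht.le _), ← Real.rpow_add ht, one_div,
    neg_add_cancel, Real.rpow_zero, ENNReal.ofReal_one, one_mul]

theorem stmt4 (p q : ℝ) (hp : 0 < p) (hq : 0 < q) (f : ℝ → ℂ) (hf : Measurable f)
    (hsupp : HasCompactSupport f) :
    Tendsto (fun t : ℝ => ENNReal.ofReal (t ^ (-(1/p))) *
        lorentzNorm torusMeasure (fun x => ∑' k : ℤ, f (t⁻¹ * (x + k)))
          (ENNReal.ofReal p) (ENNReal.ofReal q))
      (𝓝[>] 0)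
      (𝓝 (lorentzNorm volume f (ENNReal.ofReal p) (ENNReal.ofReal q))) := by
  obtain ⟨r, hr⟩ := hsupp.isCompact.isBounded.subset_closedBall (0:ℝ)
  set R := max r 1 with hRdef
  have hR0 : 0 < R := lt_of_lt_of_le one_pos (le_max_right r 1)
  have hR : Function.support f ⊆ Metric.closedBall 0 R :=
    (subset_tsupport f).trans
      (hr.trans (Metric.closedBall_subset_closedBall (le_max_left r 1)))
  have hmem : Ioo (0:ℝ) (1/(2*R)) ∈ 𝓝[>] (0:ℝ) :=
    Ioo_mem_nhdsGT_of_mem ⟨le_rfl, by positivity⟩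
  refine Tendsto.congr' ?_ tendsto_const_nhds
  filter_upwards [hmem] with t ht
  have htR : t * R < 1/2 := by
    have h2 := ht.2
    rw [lt_div_iff₀ (by positivity : (0:ℝ) < 2*R)] at h2
    nlinarith
  exact (key_norm p q hp hq f hR0 hR ht.1 htR).symm
end

section
/- Let 0 < p < ∞ and q = ∞, and let f : ℝ → ℂ be measurable with compact support. Then lim_{t→0⁺} t^{-1/p} ‖ (D_t f)~ ‖_{L^{p,∞}(𝕋)} = ‖f‖_{L^{p,∞}(ℝ)}, where (D_t f)~ denotes the 1-periodization of D_t f(x) = f(t⁻¹ x). -/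
open MeasureTheory Filter Set
open scoped ENNReal NNReal Topology

lemma periodization_eq (f : ℝ → ℂ) (R t : ℝ) (hR : ∀ x, f x ≠ 0 → |x| ≤ R)
    (ht : 0 < t) (htR : t * R < 1/2) {x : ℝ} (hx : x ∈ Set.Ico (-(1/2):ℝ) (1/2)) :
    ∑' k : ℤ, f (t⁻¹ * (x + k)) = f (t⁻¹ * x) := by
  rw [tsum_eq_single 0]
  · norm_num
  · intro k hk
    by_contra h
    have hk1 : (1:ℝ) ≤ |(k:ℝ)| := by
      have h0 : (1:ℤ) ≤ |k| := Int.one_le_abs hk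
      calc (1:ℝ) ≤ ((|k| : ℤ) : ℝ) := by exact_mod_cast h0
        _ = |(k:ℝ)| := by push_cast; ring
    have hx2 : |x| ≤ 1/2 := by
      rw [abs_le]; exact ⟨by linarith [hx.1], by linarith [hx.2]⟩
    have h3 : |(k:ℝ)| ≤ |x + k| + |x| := by
      calc |(k:ℝ)| = |(x + k) + (-x)| := by ring_nf
        _ ≤ |x + k| + |(-x)| := abs_add_le _ _
        _ = |x + k| + |x| := by rw [abs_neg]
    have h12 : (1:ℝ)/2 ≤ |x + k| := by linarith
    have habs := hR _ h
    rw [abs_mul, abs_of_pos (inv_pos.2 ht)] at habs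
    have h5 : t * (t⁻¹ * |x + k|) ≤ t * R := mul_le_mul_of_nonneg_left habs ht.le
    rw [mul_inv_cancel_left₀ ht.ne'] at h5
    linarith

lemma distrib_scale (f : ℝ → ℂ) (R t : ℝ) (hR : ∀ x, f x ≠ 0 → |x| ≤ R)
    (ht : 0 < t) (htR : t * R < 1/2) (l : ℝ≥0) :
    distrib torusMeasure (fun x => ∑' k : ℤ, f (t⁻¹ * (x + k))) l
      = ENNReal.ofReal t * distrib volume f l := by
  have hT : {x : ℝ | (l:ℝ) < ‖f (t⁻¹ * x)‖} ⊆ Set.Ico (-(1/2):ℝ) (1/2) := by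
    intro x hx
    simp only [Set.mem_setOf_eq] at hx
    have hne : f (t⁻¹ * x) ≠ 0 := by
      intro h
      rw [h] at hx
      simp at hx
    have habs := hR _ hne
    rw [abs_mul, abs_of_pos (inv_pos.2 ht)] at habs
    have h5 : t * (t⁻¹ * |x|) ≤ t * R := mul_le_mul_of_nonneg_left habs ht.le
    rw [mul_inv_cancel_left₀ ht.ne'] at h5
    have hxb : |x| < 1/2 := by linarith
    rw [abs_lt] at hxb
    exact ⟨by linarith [hxb.1], hxb.2⟩
  have hset : {x : ℝ | (l:ℝ) < ‖(fun x => ∑' k : ℤ, f (t⁻¹ * (x + k))) x‖}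
        ∩ Set.Ico (-(1/2):ℝ) (1/2)
      = (t⁻¹ * ·) ⁻¹' {y : ℝ | (l:ℝ) < ‖f y‖} := by
    ext x
    simp only [Set.mem_inter_iff, Set.mem_setOf_eq, Set.mem_preimage]
    constructor
    · rintro ⟨h1, h2⟩
      rwa [periodization_eq f R t hR ht htR h2] at h1
    · intro h
      have hx : x ∈ Set.Ico (-(1/2):ℝ) (1/2) := hT h
      exact ⟨by rwa [periodization_eq f R t hR ht htR hx], hx⟩
  rw [distrib, torusMeasure, Measure.restrict_apply' measurableSet_Ico, hset,
    Real.volume_preimage_mul_left (inv_ne_zero ht.ne'), inv_inv, abs_of_pos ht]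
  rfl

lemma rearr_scale (f : ℝ → ℂ) (R t : ℝ) (hR : ∀ x, f x ≠ 0 → |x| ≤ R)
    (ht : 0 < t) (htR : t * R < 1/2) (s : ℝ) :
    rearr torusMeasure (fun x => ∑' k : ℤ, f (t⁻¹ * (x + k))) s
      = rearr volume f (s / t) := by
  unfold rearr
  refine iInf_congr fun l => ?_
  refine iInf_congr_Prop ?_ (fun _ => rfl)
  rw [distrib_scale f R t hR ht htR l, ENNReal.ofReal_div_of_pos ht,
    ENNReal.le_div_iff_mul_le (Or.inl (ENNReal.ofReal_pos.2 ht).ne')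
      (Or.inl ENNReal.ofReal_ne_top), mul_comm]

theorem stmt5 (p : ℝ) (hp : 0 < p) (f : ℝ → ℂ) (hf : Measurable f)
    (hsupp : HasCompactSupport f) :
    Tendsto (fun t : ℝ => ENNReal.ofReal (t ^ (-(1/p))) *
        lorentzNorm torusMeasure (fun x => ∑' k : ℤ, f (t⁻¹ * (x + k)))
          (ENNReal.ofReal p) ∞)
      (𝓝[>] 0)
      (𝓝 (lorentzNorm volume f (ENNReal.ofReal p) ∞)) := by
  obtain ⟨R₀, hR₀⟩ := hsupp.isBounded.subset_closedBall 0
  set R : ℝ := max R₀ 1 with hRdef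
  have hRpos : 0 < R := lt_of_lt_of_le one_pos (le_max_right _ _)
  have hR : ∀ x, f x ≠ 0 → |x| ≤ R := by
    intro x hx
    have h1 : x ∈ tsupport f := subset_tsupport f hx
    have h2 := hR₀ h1
    rw [Metric.mem_closedBall, Real.dist_eq, sub_zero] at h2
    exact h2.trans (le_max_left _ _)
  have hq : (ENNReal.ofReal p).toReal = p := ENNReal.toReal_ofReal hp.le
  set L : ℝ≥0∞ := lorentzNorm volume f (ENNReal.ofReal p) ∞ with hLdef
  refine Tendsto.congr' ?_ (tendsto_const_nhds (x := L))
  have hmem : Set.Ioo (0:ℝ) (1/(2*R)) ∈ 𝓝[>] (0:ℝ) :=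
    Ioo_mem_nhdsGT_of_mem ⟨le_refl _, by positivity⟩
  filter_upwards [hmem] with t ht
  obtain ⟨ht0, ht1⟩ := ht
  have htR : t * R < 1/2 := by
    rw [lt_div_iff₀ (by positivity)] at ht1
    nlinarith
  have hL : L = ⨆ u ∈ Set.Ioi (0:ℝ), ENNReal.ofReal (u ^ p⁻¹) * rearr volume f u := by
    rw [hLdef, lorentzNorm, if_pos rfl, hq]
  have hsup : lorentzNorm torusMeasure (fun x => ∑' k : ℤ, f (t⁻¹ * (x + k)))
      (ENNReal.ofReal p) ∞ = ENNReal.ofReal (t ^ p⁻¹) * L := by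
    rw [lorentzNorm, if_pos rfl, hq]
    have key : ∀ s : ℝ, 0 < s →
        ENNReal.ofReal (s ^ p⁻¹) * rearr volume f (s / t)
          = ENNReal.ofReal (t ^ p⁻¹) *
            (ENNReal.ofReal ((s / t) ^ p⁻¹) * rearr volume f (s / t)) := by
      intro s hs
      rw [← mul_assoc, ← ENNReal.ofReal_mul (Real.rpow_nonneg ht0.le _),
        ← Real.mul_rpow ht0.le (div_nonneg hs.le ht0.le),
        mul_div_cancel₀ _ ht0.ne']
    simp only [rearr_scale f R t hR ht0 htR]
    rw [hL]
    apply le_antisymm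
    · refine iSup₂_le fun s hs => ?_
      have hs' : (0:ℝ) < s := hs
      rw [key s hs']
      exact mul_le_mul_right (le_iSup₂ (f := fun u (_ : u ∈ Set.Ioi (0:ℝ)) =>
        ENNReal.ofReal (u ^ p⁻¹) * rearr volume f u) (s / t) (div_pos hs' ht0)) _
    · rw [ENNReal.mul_iSup]
      refine iSup_le fun u => ?_
      rw [ENNReal.mul_iSup]
      refine iSup_le fun hu => ?_
      have hu' : (0:ℝ) < u := hu
      have hs : t * u ∈ Set.Ioi (0:ℝ) := mul_pos ht0 hu'
      have hdiv : (t * u) / t = u := by field_simp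
      calc ENNReal.ofReal (t ^ p⁻¹) * (ENNReal.ofReal (u ^ p⁻¹) * rearr volume f u)
          = ENNReal.ofReal ((t * u) ^ p⁻¹) * rearr volume f ((t * u) / t) := by
            rw [key (t * u) hs, hdiv]
        _ ≤ _ := le_iSup₂ (f := fun s (_ : s ∈ Set.Ioi (0:ℝ)) =>
            ENNReal.ofReal (s ^ p⁻¹) * rearr volume f (s / t)) (t * u) hs
  rw [hsup, ← mul_assoc, ← ENNReal.ofReal_mul (Real.rpow_nonneg ht0.le _),
    one_div, Real.rpow_neg ht0.le, inv_mul_cancel₀ (Real.rpow_pos_of_pos ht0 _).ne',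
    ENNReal.ofReal_one, one_mul]
end

section
/- Let f be a 1-periodic measurable function, φ ∈ S(ℝ) radial and nonincreasing on [0,∞), and ε, λ, t > 0. Then the distribution function satisfies the pointwise estimate m_{f · (φ∘(ε·))}(t) ≤ (λε⁻¹ + 1) m_f(t φ(0)⁻¹) + (λε⁻¹ + 2) Σ_{n=0}^∞ 2^n m_f(t φ(λ 2^{n-1})⁻¹), where on the left m denotes Lebesgue measure on ℝ and on the right m_f denotes the distribution on 𝕋 = [-1/2,1/2). -/
open MeasureTheory Filter Set
open scoped ENNReal NNReal Topology

lemma key_period (f : ℝ → ℂ) (hf : Measurable f) (hper : Function.Periodic f 1)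
    (s a : ℝ) :
    volume ({x | s < ‖f x‖} ∩ Ioc a (a + 1)) ≤ distrib torusMeasure f s := by
  set A := {x | s < ‖f x‖} with hA
  have hAm : MeasurableSet A := measurableSet_lt measurable_const (hf.norm)
  have heq : volume (A ∩ Ioc a (a + 1)) = volume (A ∩ Ioc (-(1/2) : ℝ) (-(1/2) + 1)) := by
    refine MeasureTheory.IsAddFundamentalDomain.measure_set_eq
      (isAddFundamentalDomain_Ioc one_pos a) (isAddFundamentalDomain_Ioc one_pos _) hAm ?_
    rintro ⟨g, hg⟩
    obtain ⟨k, rfl⟩ := hg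
    ext x
    simp only [mem_preimage, hA, mem_setOf_eq]
    have : f (k • (1:ℝ) + x) = f x := by
      rw [add_comm]; exact (hper.zsmul k) x
    rw [show ((⟨k • (1:ℝ), ⟨k, rfl⟩⟩ : AddSubgroup.zmultiples (1:ℝ)) +ᵥ x) = k • (1:ℝ) + x from rfl, this]
  rw [heq]
  have hsub : A ∩ Ioc (-(1/2) : ℝ) (-(1/2) + 1) ⊆ (A ∩ Ico (-(1/2):ℝ) (1/2)) ∪ {(1/2 : ℝ)} := by
    rintro x ⟨hx, h1, h2⟩
    rcases lt_or_eq_of_le h2 with h | h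
    · left; exact ⟨hx, h1.le, by linarith⟩
    · right; simp [h]; linarith
  calc volume (A ∩ Ioc (-(1/2) : ℝ) (-(1/2) + 1)) ≤ volume ((A ∩ Ico (-(1/2):ℝ) (1/2)) ∪ {(1/2:ℝ)}) :=
        measure_mono hsub
    _ ≤ volume (A ∩ Ico (-(1/2):ℝ) (1/2)) + volume {(1/2:ℝ)} := measure_union_le _ _
    _ = distrib torusMeasure f s := by
        rw [Real.volume_singleton, add_zero, distrib, torusMeasure, Measure.restrict_apply hAm]

lemma key_cover (f : ℝ → ℂ) (hf : Measurable f) (hper : Function.Periodic f 1)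
    (s c L : ℝ) (hL : 0 ≤ L) :
    volume ({x | s < ‖f x‖} ∩ Icc c (c + L))
      ≤ ENNReal.ofReal (L + 1) * distrib torusMeasure f s := by
  set A := {x | s < ‖f x‖} with hA
  set N : ℕ := ⌊L⌋₊ + 1 with hN
  have hLN : L < (N:ℝ) := by push_cast [hN]; exact Nat.lt_floor_add_one L
  have hsub : A ∩ Icc c (c + L) ⊆ {c} ∪ ⋃ k ∈ Finset.range N, (A ∩ Ioc (c + k) (c + k + 1)) := by
    rintro x ⟨hx, h1, h2⟩
    rcases eq_or_lt_of_le h1 with h | h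
    · left; simp [h.symm]
    · right
      have hxc : 0 < x - c := by linarith
      set k : ℕ := ⌈x - c⌉₊ - 1 with hk
      have hck : 1 ≤ ⌈x - c⌉₊ := Nat.one_le_ceil_iff.2 hxc
      have hk1 : (k : ℕ) + 1 = ⌈x - c⌉₊ := Nat.succ_pred_eq_of_pos hck
      have hkN : k < N := by
        have : ⌈x - c⌉₊ ≤ N := Nat.ceil_le.2 (by linarith)
        omega
      refine mem_iUnion.2 ⟨k, mem_iUnion.2 ⟨Finset.mem_range.2 hkN, hx, ?_, ?_⟩⟩
      · have : (k : ℝ) < x - c := by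
          by_contra hcon
          push_neg at hcon
          have := Nat.ceil_le.2 hcon
          omega
        linarith
      · have : x - c ≤ (⌈x - c⌉₊ : ℝ) := Nat.le_ceil _
        have h2 : ((k : ℕ) + 1 : ℝ) = (⌈x - c⌉₊ : ℝ) := by exact_mod_cast congrArg (Nat.cast (R := ℝ)) hk1
        push_cast at h2 ⊢
        linarith
  calc volume (A ∩ Icc c (c + L))
      ≤ volume ({c} : Set ℝ) + volume (⋃ k ∈ Finset.range N, (A ∩ Ioc (c + k) (c + k + 1))) := by
        refine le_trans (measure_mono hsub) (measure_union_le _ _)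
    _ = volume (⋃ k ∈ Finset.range N, (A ∩ Ioc (c + k) (c + k + 1))) := by
        rw [Real.volume_singleton, zero_add]
    _ ≤ ∑ k ∈ Finset.range N, volume (A ∩ Ioc (c + k) (c + k + 1)) :=
        measure_biUnion_finset_le _ _
    _ ≤ ∑ k ∈ Finset.range N, distrib torusMeasure f s := by
        refine Finset.sum_le_sum fun k _ => ?_
        have := key_period f hf hper s (c + k)
        simpa [add_assoc] using this
    _ = (N : ℝ≥0∞) * distrib torusMeasure f s := by
        rw [Finset.sum_const, Finset.card_range, nsmul_eq_mul]
    _ ≤ ENNReal.ofReal (L + 1) * distrib torusMeasure f s := by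
        gcongr
        rw [← ENNReal.ofReal_natCast N]
        exact ENNReal.ofReal_le_ofReal (by push_cast [hN]; have := Nat.floor_le hL; linarith)

theorem stmt11 (f : ℝ → ℂ) (hf : Measurable f) (hper : Function.Periodic f 1)
    (φ : ℝ → ℝ) (hφ : Measurable φ) (hpos : ∀ x, 0 ≤ φ x) (heven : ∀ x, φ (-x) = φ x)
    (hmono : AntitoneOn φ (Set.Ici 0)) (ε l t : ℝ) (hε : 0 < ε) (hl : 0 < l) (ht : 0 < t) :
    distrib volume (fun x => f x * Complex.ofReal (φ (ε * x))) t
      ≤ ENNReal.ofReal (l * ε⁻¹ + 1) * distrib torusMeasure f (t * (φ 0)⁻¹)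
        + ENNReal.ofReal (l * ε⁻¹ + 2) *
            ∑' n : ℕ, 2 ^ n * distrib torusMeasure f (t * (φ (l * 2 ^ ((n:ℝ) - 1)))⁻¹) := by
  have habs : ∀ x, ‖f x * Complex.ofReal (φ (ε * x))‖
      = ‖f x‖ * φ (ε * x) := by
    intro x
    rw [norm_mul, Complex.norm_real, Real.norm_eq_abs, abs_of_nonneg (hpos _)]
  have hφle : ∀ y, φ y ≤ φ 0 := by
    intro y
    rcases le_or_gt 0 y with hy | hy
    · exact hmono (mem_Ici.2 le_rfl) (mem_Ici.2 hy) hy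
    · rw [← heven]; exact hmono (mem_Ici.2 le_rfl) (mem_Ici.2 (by linarith)) (by linarith)
  have hφabs : ∀ y : ℝ, φ y = φ |y| := by
    intro y
    rcases le_or_gt 0 y with hy | hy
    · rw [abs_of_nonneg hy]
    · rw [abs_of_neg hy, heven]
  rcases eq_or_lt_of_le (hpos 0) with h0 | hφ0
  · -- φ 0 = 0, so φ ≡ 0 and the LHS set is empty
    have hzero : ∀ y, φ y = 0 := fun y => le_antisymm ((hφle y).trans h0.ge) (hpos y)
    have : {x : ℝ | t < ‖f x * Complex.ofReal (φ (ε * x))‖} = ∅ := by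
      ext x
      simp only [mem_setOf_eq, mem_empty_iff_false, iff_false, not_lt]
      rw [habs, hzero, mul_zero]
      exact ht.le
    rw [distrib, this, measure_empty]
    exact zero_le
  · -- main case
    set a : ℕ → ℝ := fun n => l * 2 ^ ((n:ℝ) - 1) with ha
    have ha_pos : ∀ n, 0 < a n := fun n => mul_pos hl (Real.rpow_pos_of_pos two_pos _)
    have ha_eq : ∀ n : ℕ, a n = l * 2 ^ n / 2 := by
      intro n
      simp only [ha]
      rw [Real.rpow_sub two_pos, Real.rpow_one, Real.rpow_natCast]
      ring
    set T : ℕ → Set ℝ := fun n => {x | t * (φ (a n))⁻¹ < ‖f x‖} with hT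
    set L : ℕ → ℝ := fun n => a n / ε with hL
    have hL_pos : ∀ n, 0 < L n := fun n => div_pos (ha_pos n) hε
    set c₀ : ℝ := -(l / (2 * ε)) with hc₀
    set E₀ : Set ℝ := {x | t * (φ 0)⁻¹ < ‖f x‖} ∩ Icc c₀ (c₀ + l * ε⁻¹) with hE₀
    set En : ℕ → Set ℝ := fun n =>
      T n ∩ (Icc (a n / ε) (a n / ε + L n) ∪ Icc (-(2 * a n / ε)) (-(2 * a n / ε) + L n)) with hEn
    have hsub : {x : ℝ | t < ‖f x * Complex.ofReal (φ (ε * x))‖}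
        ⊆ E₀ ∪ ⋃ n, En n := by
      intro x hx
      simp only [mem_setOf_eq, habs] at hx
      have hφx : φ (ε * x) = φ (ε * |x|) := by
        rw [hφabs (ε * x), abs_mul, abs_of_pos hε]
      rw [hφx] at hx
      set y := ε * |x| with hy
      have hy0 : 0 ≤ y := mul_nonneg hε.le (abs_nonneg x)
      rcases le_or_gt y (l / 2) with hcase | hcase
      · -- x ∈ E₀
        left
        constructor
        · have h1 : t < ‖f x‖ * φ 0 :=
            lt_of_lt_of_le hx (mul_le_mul_of_nonneg_left (hφle y) (norm_nonneg _))
          have := (div_lt_iff₀ hφ0).2 h1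
          rwa [div_eq_mul_inv] at this
        · have hxle : |x| ≤ l / (2 * ε) := by
            rw [le_div_iff₀ (by positivity)]
            calc |x| * (2 * ε) = 2 * y := by rw [hy]; ring
              _ ≤ l := by linarith
          have hend : c₀ + l * ε⁻¹ = l / (2 * ε) := by
            rw [hc₀]; field_simp; ring
          rw [hend]
          exact abs_le.1 hxle
      · -- x in some annulus
        right
        have hex : ∃ n : ℕ, y ≤ l * 2 ^ n := by
          obtain ⟨n, hn⟩ := pow_unbounded_of_one_lt (y / l) (one_lt_two (α := ℝ))
          exact ⟨n, le_of_lt (by rw [mul_comm]; exact (div_lt_iff₀ hl).1 hn)⟩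
        set n := Nat.find hex with hn
        have hub : y ≤ l * 2 ^ n := Nat.find_spec hex
        have hlb : a n ≤ y := by
          rw [ha_eq]
          rcases Nat.eq_zero_or_pos n with h | h
          · rw [h]; simpa using (le_of_lt (by simpa [div_le_iff₀ (two_pos (α := ℝ))] using hcase))
          · have hfind := Nat.find_min hex (show n - 1 < Nat.find hex by rw [← hn]; omega)
            push_neg at hfind
            have h2 : (2:ℝ) ^ n = 2 ^ (n - 1) * 2 := by
              rw [← pow_succ]; congr 1; omega
            rw [h2]
            nlinarith [hfind.le]
        have hφy : φ y ≤ φ (a n) :=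
          hmono (mem_Ici.2 (ha_pos n).le) (mem_Ici.2 hy0) hlb
        have h1 : t < ‖f x‖ * φ (a n) :=
          lt_of_lt_of_le hx (mul_le_mul_of_nonneg_left hφy (norm_nonneg _))
        have hφan : 0 < φ (a n) := by
          by_contra hcon
          push_neg at hcon
          have : ‖f x‖ * φ (a n) ≤ 0 :=
            mul_nonpos_of_nonneg_of_nonpos (norm_nonneg _) hcon
          linarith
        refine mem_iUnion.2 ⟨n, ?_, ?_⟩
        · have := (div_lt_iff₀ hφan).2 h1
          rwa [div_eq_mul_inv] at this
        · have hxlb : a n / ε ≤ |x| := by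
            rw [div_le_iff₀ hε]; rw [hy] at hlb; linarith [hlb, mul_comm ε |x|]
          have hxub : |x| ≤ 2 * a n / ε := by
            rw [le_div_iff₀ hε]
            have : l * 2 ^ n = 2 * a n := by rw [ha_eq]; ring
            rw [this] at hub
            rw [hy] at hub; linarith [mul_comm ε |x|]
          rcases le_or_gt 0 x with hx0 | hx0
          · left
            rw [abs_of_nonneg hx0] at hxlb hxub
            refine ⟨hxlb, ?_⟩
            rw [hL]
            calc x ≤ 2 * a n / ε := hxub
              _ = a n / ε + a n / ε := by ring
          · right
            rw [abs_of_neg hx0] at hxlb hxub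
            constructor
            · linarith
            · rw [hL]; have : -(2 * a n / ε) + a n / ε = -(a n / ε) := by ring
              rw [this]; linarith
    calc distrib volume (fun x => f x * Complex.ofReal (φ (ε * x))) t
        ≤ volume (E₀ ∪ ⋃ n, En n) := measure_mono hsub
      _ ≤ volume E₀ + volume (⋃ n, En n) := measure_union_le _ _
      _ ≤ ENNReal.ofReal (l * ε⁻¹ + 1) * distrib torusMeasure f (t * (φ 0)⁻¹)
          + ∑' n : ℕ, volume (En n) := by
          gcongr
          · exact le_trans (key_cover f hf hper _ c₀ (l * ε⁻¹) (by positivity)) le_rfl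
          · exact measure_iUnion_le _
      _ ≤ ENNReal.ofReal (l * ε⁻¹ + 1) * distrib torusMeasure f (t * (φ 0)⁻¹)
          + ENNReal.ofReal (l * ε⁻¹ + 2) *
            ∑' n : ℕ, 2 ^ n * distrib torusMeasure f (t * (φ (l * 2 ^ ((n:ℝ) - 1)))⁻¹) := by
          gcongr
          rw [← ENNReal.tsum_mul_left]
          refine Summable.tsum_le_tsum (fun n => ?_) ENNReal.summable ENNReal.summable
          have hsplit : volume (En n)
              ≤ volume (T n ∩ Icc (a n / ε) (a n / ε + L n))
                + volume (T n ∩ Icc (-(2 * a n / ε)) (-(2 * a n / ε) + L n)) := by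
            have heq2 : En n = (T n ∩ Icc (a n / ε) (a n / ε + L n))
                ∪ (T n ∩ Icc (-(2 * a n / ε)) (-(2 * a n / ε) + L n)) := by
              simp only [hEn]; rw [inter_union_distrib_left]
            rw [heq2]
            exact measure_union_le _ _
          have hone : volume (T n ∩ Icc (a n / ε) (a n / ε + L n))
              ≤ ENNReal.ofReal (L n + 1) * distrib torusMeasure f (t * (φ (a n))⁻¹) :=
            key_cover f hf hper _ _ _ (hL_pos n).le
          have htwo : volume (T n ∩ Icc (-(2 * a n / ε)) (-(2 * a n / ε) + L n))
              ≤ ENNReal.ofReal (L n + 1) * distrib torusMeasure f (t * (φ (a n))⁻¹) :=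
            key_cover f hf hper _ _ _ (hL_pos n).le
          have hcoef : ENNReal.ofReal (L n + 1) + ENNReal.ofReal (L n + 1)
              ≤ ENNReal.ofReal (l * ε⁻¹ + 2) * 2 ^ n := by
            rw [← ENNReal.ofReal_add (by positivity) (by positivity)]
            have h2n : ENNReal.ofReal ((2:ℝ) ^ n) = (2:ℝ≥0∞) ^ n := by
              rw [ENNReal.ofReal_pow (by norm_num)]
              norm_num
            rw [← h2n, ← ENNReal.ofReal_mul (by positivity)]
            refine ENNReal.ofReal_le_ofReal ?_
            have h1 : (1:ℝ) ≤ 2 ^ n := by exact_mod_cast Nat.one_le_two_pow (n := n)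
            have hLval : L n + 1 + (L n + 1) = l * 2 ^ n * ε⁻¹ + 2 := by
              simp only [hL, ha_eq]; field_simp; ring
            rw [hLval]
            have : l * 2 ^ n * ε⁻¹ + 2 ≤ l * ε⁻¹ * 2 ^ n + 2 * 2 ^ n := by
              have h2 : (2:ℝ) ≤ 2 * 2 ^ n := by nlinarith
              nlinarith
            linarith [this, mul_comm (l * ε⁻¹ + 2) ((2:ℝ) ^ n)]
          calc volume (En n)
              ≤ ENNReal.ofReal (L n + 1) * distrib torusMeasure f (t * (φ (a n))⁻¹)
                + ENNReal.ofReal (L n + 1) * distrib torusMeasure f (t * (φ (a n))⁻¹) :=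
                le_trans hsplit (add_le_add hone htwo)
            _ = (ENNReal.ofReal (L n + 1) + ENNReal.ofReal (L n + 1))
                * distrib torusMeasure f (t * (φ (a n))⁻¹) := by rw [add_mul]
            _ ≤ ENNReal.ofReal (l * ε⁻¹ + 2) * 2 ^ n
                * distrib torusMeasure f (t * (φ (a n))⁻¹) := by gcongr
            _ = ENNReal.ofReal (l * ε⁻¹ + 2)
                * (2 ^ n * distrib torusMeasure f (t * (φ (l * 2 ^ ((n:ℝ) - 1)))⁻¹)) := by
                simp only [ha]; ring
end

section
/- Let 0 < p < ∞, let f be a 1-periodic function in L^p(𝕋), and let φ ∈ S(ℝ) be radial and decreasing on [0,∞). Then lim_{ε→0⁺} ‖ f · D_{ε⁻¹}^p φ ‖_{L^p(ℝ)} = ‖φ‖_{L^p(ℝ)} ‖f‖_{L^p(𝕋)}, where D_{ε⁻¹}^p φ(x) = ε^{1/p} φ(εx). -/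
open MeasureTheory Filter Set
open scoped ENNReal NNReal Topology

namespace Stmt14Aux

lemma setLIntegral_Ico_add (g : ℝ → ℝ≥0∞) (a b c : ℝ) :
    ∫⁻ x in Ico (a + c) (b + c), g x = ∫⁻ x in Ico a b, g (x + c) := by
  have hpre : (fun x : ℝ => x + c) ⁻¹' (Ico (a + c) (b + c)) = Ico a b := by
    ext x
    simp only [mem_preimage, mem_Ico]
    constructor <;> rintro ⟨h1, h2⟩ <;> constructor <;> linarith
  have h := (measurePreserving_add_right (volume : Measure ℝ) c).setLIntegral_comp_preimage_emb
      (MeasurableEquiv.addRight c).measurableEmbedding g (Ico (a + c) (b + c))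
  rw [hpre] at h
  rw [← h]

lemma setLIntegral_neg (g : ℝ → ℝ≥0∞) (s : Set ℝ) :
    ∫⁻ x in Neg.neg ⁻¹' s, g (-x) = ∫⁻ x in s, g x := by
  have h := (Measure.measurePreserving_neg (volume : Measure ℝ)).setLIntegral_comp_preimage_emb
      (MeasurableEquiv.neg ℝ).measurableEmbedding g s
  exact h


section Periodic

variable (g : ℝ → ℝ≥0∞) (hg1 : ∀ x, g (x + 1) = g x)
include hg1

lemma key_step (a b : ℝ) (hab : a ≤ b) (hb : b ≤ a + 1) :
    ∫⁻ x in Ico a (a + 1), g x = ∫⁻ x in Ico b (b + 1), g x := by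
  have h1 : Ico a b ∪ Ico b (a + 1) = Ico a (a + 1) := Ico_union_Ico_eq_Ico hab hb
  have h2 : Ico b (a + 1) ∪ Ico (a + 1) (b + 1) = Ico b (b + 1) :=
    Ico_union_Ico_eq_Ico hb (by linarith)
  have h3 : ∫⁻ x in Ico (a + 1) (b + 1), g x = ∫⁻ x in Ico a b, g x := by
    rw [setLIntegral_Ico_add g a b 1]
    exact lintegral_congr fun x => hg1 x
  rw [← h1, ← h2, lintegral_union measurableSet_Ico (Ico_disjoint_Ico_same),
    lintegral_union measurableSet_Ico (Ico_disjoint_Ico_same), h3]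
  ring

lemma F_eq : ∀ a b : ℝ, ∫⁻ x in Ico a (a + 1), g x = ∫⁻ x in Ico b (b + 1), g x := by
  have H : ∀ n : ℕ, ∀ a b : ℝ, a ≤ b → b ≤ a + n →
      ∫⁻ x in Ico a (a + 1), g x = ∫⁻ x in Ico b (b + 1), g x := by
    intro n
    induction n with
    | zero =>
      intro a b h1 h2
      have : a = b := le_antisymm h1 (by simpa using h2)
      rw [this]
    | succ n ih =>
      intro a b h1 h2
      by_cases hb : b ≤ a + 1
      · exact key_step g hg1 a b h1 hb
      · have h4 := key_step g hg1 a (a + 1) (by linarith) le_rfl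
        rw [h4]
        have h2' : b ≤ a + 1 + n := by push_cast at h2; linarith
        exact ih (a + 1) b (by linarith) h2'
  intro a b
  rcases le_total a b with h | h
  · obtain ⟨n, hn⟩ := exists_nat_ge (b - a)
    exact H n a b h (by linarith)
  · obtain ⟨n, hn⟩ := exists_nat_ge (a - b)
    exact (H n b a h (by linarith)).symm

lemma Ico_nat (a : ℝ) (n : ℕ) :
    ∫⁻ x in Ico a (a + n), g x = n * ∫⁻ x in Ico (-(1/2) : ℝ) (1/2), g x := by
  induction n with
  | zero => simp
  | succ n ih =>
    have hsplit : Ico a (a + n) ∪ Ico (a + n) (a + (n + 1 : ℕ)) = Ico a (a + (n + 1 : ℕ)) := by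
      apply Ico_union_Ico_eq_Ico (by push_cast; linarith) (by push_cast; linarith)
    have hlast : ∫⁻ x in Ico (a + n) (a + (n + 1 : ℕ)), g x
        = ∫⁻ x in Ico (-(1/2) : ℝ) (1/2), g x := by
      have : (a + (n + 1 : ℕ) : ℝ) = (a + n) + 1 := by push_cast; ring
      rw [this]
      have h5 := F_eq g hg1 (a + n) (-(1/2))
      rw [h5]
      norm_num
    rw [← hsplit, lintegral_union measurableSet_Ico (Ico_disjoint_Ico_same), ih,
      hlast]
    push_cast
    ring

lemma upper_bound (c d : ℝ) :
    ∫⁻ x in Icc c d, g x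
      ≤ (ENNReal.ofReal (d - c) + 1) * ∫⁻ x in Ico (-(1/2) : ℝ) (1/2), g x := by
  set B := ∫⁻ x in Ico (-(1/2) : ℝ) (1/2), g x with hB
  rcases lt_or_ge d c with h | h
  · rw [Icc_eq_empty (by linarith)]
    simp
  · set n : ℕ := ⌊d - c⌋₊ + 1 with hn
    have hsub : Icc c d ⊆ Ico c (c + n) := by
      intro x hx
      rcases hx with ⟨hx1, hx2⟩
      constructor
      · exact hx1
      · have : d - c < n := by
          rw [hn]; push_cast
          exact Nat.lt_floor_add_one (d - c)
        linarith
    calc ∫⁻ x in Icc c d, g x ≤ ∫⁻ x in Ico c (c + n), g x := lintegral_mono_set hsub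
      _ = n * B := Ico_nat g hg1 c n
      _ ≤ (ENNReal.ofReal (d - c) + 1) * B := by
        apply mul_le_mul_left
        have : (n : ℝ≥0∞) = (⌊d - c⌋₊ : ℝ≥0∞) + 1 := by rw [hn]; push_cast; ring
        rw [this]
        apply add_le_add_left
        rw [show ((⌊d - c⌋₊ : ℝ≥0∞)) = ENNReal.ofReal (⌊d - c⌋₊ : ℝ) by
          rw [ENNReal.ofReal_natCast]]
        exact ENNReal.ofReal_le_ofReal (Nat.floor_le (by linarith))

lemma lower_bound (c d : ℝ) :
    ENNReal.ofReal (d - c) * ∫⁻ x in Ico (-(1/2) : ℝ) (1/2), g x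
      ≤ (∫⁻ x in Ico c d, g x) + ∫⁻ x in Ico (-(1/2) : ℝ) (1/2), g x := by
  set B := ∫⁻ x in Ico (-(1/2) : ℝ) (1/2), g x with hB
  rcases lt_or_ge d c with h | h
  · rw [ENNReal.ofReal_eq_zero.mpr (by linarith)]
    simp
  · set n : ℕ := ⌊d - c⌋₊ with hn
    have hsub : Ico c (c + n) ⊆ Ico c d := by
      intro x hx
      rcases hx with ⟨hx1, hx2⟩
      refine ⟨hx1, ?_⟩
      have : (n : ℝ) ≤ d - c := by rw [hn]; exact Nat.floor_le (by linarith)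
      linarith
    have h1 : ENNReal.ofReal (d - c) ≤ (n : ℝ≥0∞) + 1 := by
      have : d - c ≤ (n : ℝ) + 1 := by
        have := Nat.lt_floor_add_one (d - c)
        rw [hn]; push_cast; linarith
      calc ENNReal.ofReal (d - c) ≤ ENNReal.ofReal ((n : ℝ) + 1) := ENNReal.ofReal_le_ofReal this
        _ = (n : ℝ≥0∞) + 1 := by
          rw [ENNReal.ofReal_add (by positivity) zero_le_one]
          simp [ENNReal.ofReal_natCast]
    calc ENNReal.ofReal (d - c) * B ≤ ((n : ℝ≥0∞) + 1) * B := mul_le_mul_left h1 B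
      _ = n * B + B := by ring
      _ = (∫⁻ x in Ico c (c + n), g x) + B := by rw [Ico_nat g hg1 c n]  -- fix
      _ ≤ (∫⁻ x in Ico c d, g x) + B := add_le_add_left (lintegral_mono_set hsub) B

end Periodic


section Superlevel

variable {ψ : ℝ → ℝ} (hψnn : ∀ x, 0 ≤ ψ x) (hψeven : ∀ x, ψ (-x) = ψ x)
  (hψanti : AntitoneOn ψ (Ici 0)) (hψtop : Tendsto ψ atTop (𝓝 0))

include hψeven in
lemma psi_abs (u : ℝ) : ψ u = ψ |u| := by
  rcases abs_cases u with ⟨h, _⟩ | ⟨h, _⟩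
  · rw [h]
  · rw [h, hψeven]

include hψeven hψanti in
lemma psi_le_zero_val (u : ℝ) : ψ u ≤ ψ 0 := by
  rw [psi_abs hψeven u]
  exact hψanti (mem_Ici.mpr le_rfl) (mem_Ici.mpr (abs_nonneg u)) (abs_nonneg u)

include hψeven hψanti in
lemma superlevel_empty {t : ℝ} (ht : ψ 0 ≤ t) : {u : ℝ | t < ψ u} = ∅ := by
  ext u
  simp only [mem_setOf_eq, mem_empty_iff_false, iff_false, not_lt]
  exact (psi_le_zero_val hψeven hψanti u).trans ht

include hψnn hψeven hψanti hψtop in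
lemma superlevel_structure {t : ℝ} (ht : 0 < t) (ht0 : t < ψ 0) :
    ∃ r : ℝ, 0 ≤ r ∧ Ioo (-r) r ⊆ {u : ℝ | t < ψ u} ∧ {u : ℝ | t < ψ u} ⊆ Icc (-r) r ∧
      volume {u : ℝ | t < ψ u} = ENNReal.ofReal (2 * r) := by
  set S := {u : ℝ | t < ψ u} with hS
  have h0S : (0 : ℝ) ∈ S := ht0
  -- boundedness
  obtain ⟨R, hR⟩ : ∃ R : ℝ, ∀ y ≥ R, ψ y < t := by
    have := hψtop.eventually (gt_mem_nhds ht)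
    rw [eventually_atTop] at this
    obtain ⟨R, hR⟩ := this
    exact ⟨R, fun y hy => hR y hy⟩
  have hSbd : ∀ u ∈ S, |u| < max R 0 + 1 := by
    intro u hu
    by_contra hcon
    push_neg at hcon
    have h1 : ψ |u| < t := hR _ (le_trans (by linarith [le_max_left R (0:ℝ)] : R ≤ max R 0 + 1) hcon)
    rw [← psi_abs hψeven u] at h1
    have hu' : t < ψ u := hu
    linarith
  have hSbdd : BddAbove S := ⟨max R 0 + 1, fun u hu => le_of_lt (lt_of_le_of_lt (le_abs_self u) (hSbd u hu))⟩
  set r := sSup S with hr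
  have hr0 : 0 ≤ r := le_csSup hSbdd h0S
  have hSne : S.Nonempty := ⟨0, h0S⟩
  -- balanced
  have hbal : ∀ u ∈ S, ∀ v : ℝ, |v| ≤ |u| → v ∈ S := by
    intro u hu v hvu
    have : ψ |u| ≤ ψ |v| := hψanti (mem_Ici.mpr (abs_nonneg v)) (mem_Ici.mpr (abs_nonneg u)) hvu
    have hu' : t < ψ u := hu
    rw [psi_abs hψeven u] at hu'
    have : t < ψ |v| := lt_of_lt_of_le hu' this
    rw [← psi_abs hψeven v] at this
    exact this
  have hsub2 : S ⊆ Icc (-r) r := by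
    intro u hu
    have h1 : u ≤ r := le_csSup hSbdd hu
    have h2 : -u ∈ S := hbal u hu (-u) (by rw [abs_neg])
    have h3 : -u ≤ r := le_csSup hSbdd h2
    exact ⟨by linarith, h1⟩
  have hsub1 : Ioo (-r) r ⊆ S := by
    intro w hw
    have habs : |w| < r := abs_lt.mpr ⟨hw.1, hw.2⟩
    obtain ⟨u, huS, hu⟩ := exists_lt_of_lt_csSup hSne habs
    exact hbal u huS w (le_of_lt (lt_of_lt_of_le hu (le_abs_self u)))
  refine ⟨r, hr0, hsub1, hsub2, ?_⟩
  apply le_antisymm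
  · calc volume S ≤ volume (Icc (-r) r) := measure_mono hsub2
      _ = ENNReal.ofReal (2 * r) := by rw [Real.volume_Icc]; ring_nf
  · calc ENNReal.ofReal (2 * r) = volume (Ioo (-r) r) := by rw [Real.volume_Ioo]; ring_nf
    _ ≤ volume S := measure_mono hsub1

end Superlevel


section PhiFacts

variable (p : ℝ) (hp : 0 < p) (φ : SchwartzMap ℝ ℝ) (heven : ∀ x, φ (-x) = φ x)
  (hmono : AntitoneOn (fun x => φ x) (Set.Ici 0))

include hmono in
lemma phi_tendsto : Tendsto (fun x => φ x) atTop (𝓝 0) := by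
  obtain ⟨C, hCpos, hC⟩ := φ.decay 1 0
  refine squeeze_zero_norm' (a := fun x : ℝ => C * x⁻¹) ?_ ?_
  · filter_upwards [eventually_ge_atTop (1 : ℝ)] with x hx
    have h := hC x
    rw [norm_iteratedFDeriv_zero, pow_one, Real.norm_eq_abs,
      abs_of_nonneg (by linarith : (0:ℝ) ≤ x)] at h
    have hx0 : (0 : ℝ) < x := by linarith
    rw [show C * x⁻¹ = C / x by ring, le_div_iff₀ hx0]
    linarith [h]
  · simpa using tendsto_inv_atTop_zero.const_mul C

include heven hmono in
lemma phi_nonneg : ∀ x, 0 ≤ φ x := by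
  have key : ∀ x : ℝ, 0 ≤ x → 0 ≤ φ x := by
    intro x hx
    apply le_of_tendsto (phi_tendsto φ hmono)
    filter_upwards [eventually_ge_atTop x] with y hy
    exact hmono (mem_Ici.mpr hx) (mem_Ici.mpr (le_trans hx hy)) hy
  intro x
  rcases le_or_gt 0 x with h | h
  · exact key x h
  · rw [← heven]; exact key (-x) (by linarith)

include hp heven hmono in
lemma psi_lintegral_finite : ∫⁻ x : ℝ, ENNReal.ofReal (φ x ^ p) ∂volume ≠ ∞ := by
  have hφnn := phi_nonneg φ heven hmono
  set ψ : ℝ → ℝ := fun x => φ x ^ p with hψdef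
  have hψnn : ∀ x, 0 ≤ ψ x := fun x => Real.rpow_nonneg (hφnn x) p
  have hψ0 : ∀ x, ψ x ≤ ψ 0 := by
    intro x
    apply psi_le_zero_val (ψ := ψ) (fun y => by simp only [hψdef, heven y]) ?_ x
    intro a ha b hb hab
    exact Real.rpow_le_rpow (hφnn b) (hmono ha hb hab) hp.le
  obtain ⟨k, hk⟩ : ∃ k : ℕ, 2 ≤ (k : ℝ) * p := by
    obtain ⟨k, hk⟩ := exists_nat_ge (2 / p)
    refine ⟨k, ?_⟩
    rw [div_le_iff₀ hp] at hk
    linarith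
  obtain ⟨C, hCpos, hC⟩ := φ.decay k 0
  have hbound : ∀ x : ℝ, 1 ≤ x → ψ x ≤ C ^ p * x ^ (-(2:ℝ)) := by
    intro x hx
    have hx0 : (0 : ℝ) < x := by linarith
    have h1 : φ x ≤ C * x ^ (-(k:ℝ)) := by
      have h := hC x
      rw [norm_iteratedFDeriv_zero, Real.norm_eq_abs, Real.norm_eq_abs,
        abs_of_nonneg hx0.le, abs_of_nonneg (hφnn x)] at h
      have hxk : (0:ℝ) < x ^ k := by positivity
      rw [Real.rpow_neg hx0.le, Real.rpow_natCast]
      calc φ x = (x ^ k * φ x) / x ^ k := by field_simp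
        _ ≤ C / x ^ k := (div_le_div_iff_of_pos_right hxk).mpr h
        _ = C * (x ^ k)⁻¹ := div_eq_mul_inv _ _
    calc ψ x = φ x ^ p := rfl
      _ ≤ (C * x ^ (-(k:ℝ))) ^ p := Real.rpow_le_rpow (hφnn x) h1 hp.le
      _ = C ^ p * (x ^ (-(k:ℝ))) ^ p := Real.mul_rpow hCpos.le (Real.rpow_nonneg hx0.le _)
      _ = C ^ p * x ^ ((-(k:ℝ)) * p) := by rw [← Real.rpow_mul hx0.le]
      _ ≤ C ^ p * x ^ (-(2:ℝ)) := by
          apply mul_le_mul_of_nonneg_left ?_ (Real.rpow_nonneg hCpos.le p)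
          apply Real.rpow_le_rpow_of_exponent_le hx
          linarith
  have hIci : (∫⁻ x in Ici (1:ℝ), ENNReal.ofReal (ψ x)) < ∞ := by
    have hInt : IntegrableOn (fun x : ℝ => C ^ p * x ^ (-(2:ℝ))) (Ioi 1) :=
      (integrableOn_Ioi_rpow_of_lt (by norm_num) one_pos).const_mul _
    have h2 : (∫⁻ x in Ioi (1:ℝ), ENNReal.ofReal (C ^ p * x ^ (-(2:ℝ)))) < ∞ :=
      hInt.lintegral_lt_top
    rw [← Measure.restrict_congr_set Ioi_ae_eq_Ici]
    refine lt_of_le_of_lt ?_ h2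
    exact setLIntegral_mono' measurableSet_Ioi
      (fun x hx => ENNReal.ofReal_le_ofReal (hbound x (le_of_lt hx)))
  have hIic : (∫⁻ x in Iic (-1:ℝ), ENNReal.ofReal (ψ x)) < ∞ := by
    have hpre : Neg.neg ⁻¹' (Iic (-1:ℝ)) = Ici 1 := by
      ext x; simp only [mem_preimage, mem_Iic, mem_Ici]; constructor <;> intro <;> linarith
    have h := setLIntegral_neg (fun x => ENNReal.ofReal (ψ x)) (Iic (-1:ℝ))
    rw [hpre] at h
    rw [← h]
    have : ∀ x : ℝ, ψ (-x) = ψ x := fun x => by simp only [hψdef, heven x]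
    simp_rw [this]
    exact hIci
  have hIcc : (∫⁻ x in Icc (-1:ℝ) 1, ENNReal.ofReal (ψ x)) < ∞ := by
    calc ∫⁻ x in Icc (-1:ℝ) 1, ENNReal.ofReal (ψ x)
        ≤ ∫⁻ _x in Icc (-1:ℝ) 1, ENNReal.ofReal (ψ 0) :=
          setLIntegral_mono' measurableSet_Icc (fun x _ => ENNReal.ofReal_le_ofReal (hψ0 x))
      _ = ENNReal.ofReal (ψ 0) * volume (Icc (-1:ℝ) 1) := setLIntegral_const _ _
      _ < ∞ := by
          rw [Real.volume_Icc]
          exact ENNReal.mul_lt_top ENNReal.ofReal_lt_top ENNReal.ofReal_lt_top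
  have hcover : (univ : Set ℝ) ⊆ Iic (-1) ∪ (Icc (-1) 1 ∪ Ici 1) := by
    intro x _
    rcases le_total x (-1) with h | h
    · exact Or.inl h
    · rcases le_total x 1 with h2 | h2
      · exact Or.inr (Or.inl ⟨h, h2⟩)
      · exact Or.inr (Or.inr h2)
  have hle : ∫⁻ x : ℝ, ENNReal.ofReal (ψ x) ∂volume
      ≤ (∫⁻ x in Iic (-1:ℝ), ENNReal.ofReal (ψ x))
        + ((∫⁻ x in Icc (-1:ℝ) 1, ENNReal.ofReal (ψ x))
          + ∫⁻ x in Ici (1:ℝ), ENNReal.ofReal (ψ x)) := by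
    calc ∫⁻ x : ℝ, ENNReal.ofReal (ψ x) ∂volume
        = ∫⁻ x in univ, ENNReal.ofReal (ψ x) := (setLIntegral_univ _).symm
      _ ≤ ∫⁻ x in Iic (-1) ∪ (Icc (-1) 1 ∪ Ici 1), ENNReal.ofReal (ψ x) :=
          lintegral_mono_set hcover
      _ ≤ _ := le_trans (lintegral_union_le _ _ _)
          (add_le_add_right (lintegral_union_le _ _ _) _)
  exact ne_of_lt (lt_of_le_of_lt hle (by
    exact ENNReal.add_lt_top.mpr ⟨hIic, ENNReal.add_lt_top.mpr ⟨hIcc, hIci⟩⟩))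

end PhiFacts


end Stmt14Aux

theorem stmt14 (p : ℝ) (hp : 0 < p) (f : ℝ → ℂ) (hf : Measurable f)
    (hper : Function.Periodic f 1)
    (hfin : eLpNorm f (ENNReal.ofReal p) torusMeasure < ∞)
    (φ : SchwartzMap ℝ ℝ) (heven : ∀ x, φ (-x) = φ x)
    (hmono : AntitoneOn (fun x => φ x) (Set.Ici 0)) :
    Tendsto (fun ε : ℝ => eLpNorm (fun x => f x * Complex.ofReal (ε ^ (1/p) * φ (ε * x)))
        (ENNReal.ofReal p) volume) (𝓝[>] 0)
      (𝓝 (eLpNorm (fun x => φ x) (ENNReal.ofReal p) volume *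
          eLpNorm f (ENNReal.ofReal p) torusMeasure)) := by
  classical
  have hφnn := Stmt14Aux.phi_nonneg φ heven hmono
  have hφtop := Stmt14Aux.phi_tendsto φ hmono
  set ψ : ℝ → ℝ := fun x => φ x ^ p with hψdef
  have hψnn : ∀ x, 0 ≤ ψ x := fun x => Real.rpow_nonneg (hφnn x) p
  have hψeven : ∀ x, ψ (-x) = ψ x := fun x => by simp only [hψdef]; rw [heven]
  have hψanti : AntitoneOn ψ (Ici 0) := fun a ha b hb hab =>
    Real.rpow_le_rpow (hφnn b) (hmono ha hb hab) hp.le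
  have hψcont : Continuous ψ := (Real.continuous_rpow_const hp.le).comp φ.continuous
  have hψtop : Tendsto ψ atTop (𝓝 0) := by
    have h0 : (0:ℝ) ^ p = 0 := Real.zero_rpow (ne_of_gt hp)
    have h := ((Real.continuous_rpow_const hp.le).tendsto 0).comp hφtop
    rw [h0] at h
    exact h
  set g : ℝ → ℝ≥0∞ := fun x => (‖f x‖₊ : ℝ≥0∞) ^ p with hgdef
  have hgmeas : Measurable g :=
    ENNReal.continuous_rpow_const.measurable.comp (measurable_coe_nnreal_ennreal.comp hf.nnnorm)
  have hg1 : ∀ x, g (x + 1) = g x := fun x => by simp only [hgdef, hper x]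
  set B : ℝ≥0∞ := ∫⁻ x in Ico (-(1/2):ℝ) (1/2), g x with hBdef
  set A : ℝ≥0∞ := (∫⁻ x, ENNReal.ofReal (ψ x)) with hAdef
  have hq0 : (ENNReal.ofReal p) ≠ 0 := by
    simp only [ne_eq, ENNReal.ofReal_eq_zero, not_le]
    exact hp
  have hqt : (ENNReal.ofReal p) ≠ ∞ := ENNReal.ofReal_ne_top
  have hqr : (ENNReal.ofReal p).toReal = p := ENNReal.toReal_ofReal hp.le
  have heLpf : eLpNorm f (ENNReal.ofReal p) torusMeasure = B ^ (1/p) := by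
    rw [eLpNorm_eq_lintegral_rpow_enorm_toReal hq0 hqt, hqr]
    simp only [enorm_eq_nnnorm, torusMeasure, hBdef, hgdef]
  have hBfin : B ≠ ∞ := by
    intro hB
    rw [heLpf, hB, ENNReal.top_rpow_of_pos (by positivity)] at hfin
    exact lt_irrefl _ hfin
  have hAfin : A ≠ ∞ := Stmt14Aux.psi_lintegral_finite p hp φ heven hmono
  have heLpφ : eLpNorm (fun x => φ x) (ENNReal.ofReal p) volume = A ^ (1/p) := by
    rw [eLpNorm_eq_lintegral_rpow_enorm_toReal hq0 hqt, hqr]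
    congr 1
    apply lintegral_congr
    intro x
    rw [Real.enorm_eq_ofReal_abs, abs_of_nonneg (hφnn x),
      ENNReal.ofReal_rpow_of_nonneg (hφnn x) hp.le]
  set μg : Measure ℝ := volume.withDensity g with hμg
  set I : ℝ → ℝ≥0∞ := fun ε => ∫⁻ x, g x * ENNReal.ofReal (ε * ψ (ε * x)) with hIdef
  have hscont : ∀ ε : ℝ, Measurable fun x => ψ (ε * x) := fun ε =>
    (hψcont.comp (continuous_const.mul continuous_id)).measurable
  have hlayerI : ∀ ε : ℝ, 0 < ε →
      I ε = ENNReal.ofReal ε * ∫⁻ t in Ioi (0:ℝ), μg {x | t < ψ (ε * x)} := by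
    intro ε hε
    simp only [hIdef]
    calc (∫⁻ x, g x * ENNReal.ofReal (ε * ψ (ε * x)))
        = ∫⁻ x, ENNReal.ofReal ε * (g x * ENNReal.ofReal (ψ (ε * x))) := by
          apply lintegral_congr
          intro x
          rw [ENNReal.ofReal_mul hε.le]
          ring
      _ = ENNReal.ofReal ε * ∫⁻ x, g x * ENNReal.ofReal (ψ (ε * x)) :=
          lintegral_const_mul' _ _ ENNReal.ofReal_ne_top
      _ = ENNReal.ofReal ε * ∫⁻ x, ENNReal.ofReal (ψ (ε * x)) ∂μg := by
          rw [hμg, lintegral_withDensity_eq_lintegral_mul volume hgmeas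
            ((hscont ε).ennreal_ofReal)]
          rfl
      _ = ENNReal.ofReal ε * ∫⁻ t in Ioi (0:ℝ), μg {x | t < ψ (ε * x)} := by
          rw [lintegral_eq_lintegral_meas_lt μg (ae_of_all _ (fun x => hψnn (ε * x)))
            ((hscont ε).aemeasurable)]
  have hA_layer : A = ∫⁻ t in Ioi (0:ℝ), volume {u : ℝ | t < ψ u} := by
    rw [hAdef, lintegral_eq_lintegral_meas_lt volume (ae_of_all _ hψnn)
      hψcont.measurable.aemeasurable]
  have hmvol_meas : Measurable (fun t : ℝ => volume {u : ℝ | t < ψ u}) :=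
    Antitone.measurable (fun s t hst => measure_mono (fun u hu => lt_of_le_of_lt hst hu))
  set c0 : ℝ := ψ 0 with hc0
  have hkey : ∀ ε : ℝ, 0 < ε → ∀ t : ℝ, 0 < t →
      (ENNReal.ofReal ε * μg {x | t < ψ (ε * x)}
          ≤ volume {u : ℝ | t < ψ u} * B
            + (Ioo (0:ℝ) c0).indicator (fun _ => ENNReal.ofReal ε * B) t
      ∧ volume {u : ℝ | t < ψ u} * B
          ≤ ENNReal.ofReal ε * μg {x | t < ψ (ε * x)}
            + (Ioo (0:ℝ) c0).indicator (fun _ => ENNReal.ofReal ε * B) t) := by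
    intro ε hε t ht
    rcases lt_or_ge t c0 with htc | htc
    · have hind : (Ioo (0:ℝ) c0).indicator (fun _ => ENNReal.ofReal ε * B) t
          = ENNReal.ofReal ε * B := indicator_of_mem (mem_Ioo.mpr ⟨ht, htc⟩) _
      obtain ⟨r, hr0, hsub1, hsub2, hvol⟩ :=
        Stmt14Aux.superlevel_structure hψnn hψeven hψanti hψtop ht htc
      have hEmeas : MeasurableSet {x : ℝ | t < ψ (ε * x)} :=
        measurableSet_lt measurable_const (hscont ε)
      have hμgE : μg {x : ℝ | t < ψ (ε * x)} = ∫⁻ x in {x : ℝ | t < ψ (ε * x)}, g x :=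
        withDensity_apply g hEmeas
      have hE2 : {x : ℝ | t < ψ (ε * x)} ⊆ Icc (-(r/ε)) (r/ε) := by
        intro x hx
        have hmem : ε * x ∈ Icc (-r) r := hsub2 hx
        constructor
        · rw [show -(r/ε) = (-r)/ε by ring]
          exact (div_le_iff₀ hε).mpr (by linarith [hmem.1])
        · exact (le_div_iff₀ hε).mpr (by linarith [hmem.2])
      have hE1 : Ioo (-(r/ε)) (r/ε) ⊆ {x : ℝ | t < ψ (ε * x)} := by
        intro x hx
        apply hsub1
        constructor
        · have h1 := hx.1
          rw [show -(r/ε) = (-r)/ε by ring] at h1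
          have := (div_lt_iff₀ hε).mp h1
          linarith
        · have h2 := hx.2
          have := (lt_div_iff₀ hε).mp h2
          linarith
      have h3 : ENNReal.ofReal ε * ENNReal.ofReal (2*r/ε) = ENNReal.ofReal (2*r) := by
        rw [← ENNReal.ofReal_mul hε.le]
        congr 1
        field_simp
      constructor
      · rw [hind, hμgE, hvol]
        calc ENNReal.ofReal ε * ∫⁻ x in {x : ℝ | t < ψ (ε * x)}, g x
            ≤ ENNReal.ofReal ε * ∫⁻ x in Icc (-(r/ε)) (r/ε), g x :=
              mul_le_mul_right (lintegral_mono_set hE2) _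
          _ ≤ ENNReal.ofReal ε * ((ENNReal.ofReal ((r/ε) - (-(r/ε))) + 1) * B) :=
              mul_le_mul_right (Stmt14Aux.upper_bound g hg1 _ _) _
          _ = ENNReal.ofReal (2*r) * B + ENNReal.ofReal ε * B := by
              rw [show (r/ε) - (-(r/ε)) = 2*r/ε by ring]
              calc ENNReal.ofReal ε * ((ENNReal.ofReal (2*r/ε) + 1) * B)
                  = (ENNReal.ofReal ε * ENNReal.ofReal (2*r/ε) + ENNReal.ofReal ε) * B := by
                    ring
                _ = (ENNReal.ofReal (2*r) + ENNReal.ofReal ε) * B := by rw [h3]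
                _ = ENNReal.ofReal (2*r) * B + ENNReal.ofReal ε * B := by ring
      · rw [hind, hμgE, hvol]
        calc ENNReal.ofReal (2*r) * B
            = ENNReal.ofReal ε * (ENNReal.ofReal (2*r/ε) * B) := by rw [← mul_assoc, h3]
          _ ≤ ENNReal.ofReal ε * ((∫⁻ x in Ico (-(r/ε)) (r/ε), g x) + B) := by
              apply mul_le_mul_right
              have hlow := Stmt14Aux.lower_bound g hg1 (-(r/ε)) (r/ε)
              rw [show (r/ε) - (-(r/ε)) = 2*r/ε by ring] at hlow
              exact hlow
          _ = ENNReal.ofReal ε * (∫⁻ x in Ico (-(r/ε)) (r/ε), g x) + ENNReal.ofReal ε * B := by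
              ring
          _ ≤ ENNReal.ofReal ε * (∫⁻ x in {x : ℝ | t < ψ (ε * x)}, g x)
              + ENNReal.ofReal ε * B := by
              apply add_le_add_left
              apply mul_le_mul_right
              calc ∫⁻ x in Ico (-(r/ε)) (r/ε), g x
                  = ∫⁻ x in Ioo (-(r/ε)) (r/ε), g x := by
                    rw [← Measure.restrict_congr_set Ioo_ae_eq_Ico]
                _ ≤ ∫⁻ x in {x : ℝ | t < ψ (ε * x)}, g x := lintegral_mono_set hE1
    · have hS : {u : ℝ | t < ψ u} = ∅ := Stmt14Aux.superlevel_empty hψeven hψanti htc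
      have hE : {x : ℝ | t < ψ (ε * x)} = ∅ := by
        ext x
        simp only [mem_setOf_eq, mem_empty_iff_false, iff_false, not_lt]
        exact (Stmt14Aux.psi_le_zero_val hψeven hψanti (ε * x)).trans htc
      constructor
      · rw [hE, hS]
        simp
      · rw [hS]
        simp
  have hindint : ∀ ε : ℝ,
      ∫⁻ t in Ioi (0:ℝ), (Ioo (0:ℝ) c0).indicator (fun _ => ENNReal.ofReal ε * B) t
        = ENNReal.ofReal ε * (B * ENNReal.ofReal c0) := by
    intro ε
    rw [lintegral_indicator measurableSet_Ioo, Measure.restrict_restrict measurableSet_Ioo,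
      inter_eq_left.mpr (fun x hx => hx.1), setLIntegral_const, Real.volume_Ioo]
    rw [sub_zero]
    ring
  have hmB : ∫⁻ t in Ioi (0:ℝ), volume {u : ℝ | t < ψ u} * B = A * B := by
    rw [lintegral_mul_const B hmvol_meas, ← hA_layer]
  have hupper : ∀ ε : ℝ, 0 < ε →
      I ε ≤ A * B + ENNReal.ofReal ε * (B * ENNReal.ofReal c0) := by
    intro ε hε
    rw [hlayerI ε hε, ← lintegral_const_mul' _ _ (ENNReal.ofReal_ne_top : ENNReal.ofReal ε ≠ ∞)]
    calc ∫⁻ t in Ioi (0:ℝ), ENNReal.ofReal ε * μg {x | t < ψ (ε * x)}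
        ≤ ∫⁻ t in Ioi (0:ℝ), (volume {u : ℝ | t < ψ u} * B
            + (Ioo (0:ℝ) c0).indicator (fun _ => ENNReal.ofReal ε * B) t) :=
          setLIntegral_mono' measurableSet_Ioi (fun t ht => (hkey ε hε t ht).1)
      _ = A * B + ENNReal.ofReal ε * (B * ENNReal.ofReal c0) := by
          rw [lintegral_add_right _ (measurable_const.indicator measurableSet_Ioo), hmB,
            hindint ε]
  have hlower : ∀ ε : ℝ, 0 < ε →
      A * B ≤ I ε + ENNReal.ofReal ε * (B * ENNReal.ofReal c0) := by
    intro ε hε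
    rw [← hmB]
    calc ∫⁻ t in Ioi (0:ℝ), volume {u : ℝ | t < ψ u} * B
        ≤ ∫⁻ t in Ioi (0:ℝ), (ENNReal.ofReal ε * μg {x | t < ψ (ε * x)}
            + (Ioo (0:ℝ) c0).indicator (fun _ => ENNReal.ofReal ε * B) t) :=
          setLIntegral_mono' measurableSet_Ioi (fun t ht => (hkey ε hε t ht).2)
      _ = I ε + ENNReal.ofReal ε * (B * ENNReal.ofReal c0) := by
          rw [lintegral_add_right _ (measurable_const.indicator measurableSet_Ioo),
            lintegral_const_mul' _ _ (ENNReal.ofReal_ne_top : ENNReal.ofReal ε ≠ ∞), ← hlayerI ε hε,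
            hindint ε]
  have hK : B * ENNReal.ofReal c0 ≠ ∞ := ENNReal.mul_ne_top hBfin ENNReal.ofReal_ne_top
  have hABfin : A * B ≠ ∞ := ENNReal.mul_ne_top hAfin hBfin
  have htend0 : Tendsto (fun ε : ℝ => ENNReal.ofReal ε * (B * ENNReal.ofReal c0))
      (𝓝[>] (0:ℝ)) (𝓝 0) := by
    have h1 : Tendsto (fun ε : ℝ => ENNReal.ofReal ε) (𝓝[>] (0:ℝ)) (𝓝 0) := by
      have h2 : Tendsto (fun ε : ℝ => ENNReal.ofReal ε) (𝓝[>] (0:ℝ)) (𝓝 (ENNReal.ofReal 0)) :=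
        (ENNReal.continuous_ofReal.tendsto 0).mono_left nhdsWithin_le_nhds
      simpa using h2
    have h3 := ENNReal.Tendsto.mul_const h1 (Or.inr hK)
    simpa using h3
  have hmain : Tendsto I (𝓝[>] (0:ℝ)) (𝓝 (A * B)) := by
    apply tendsto_of_tendsto_of_tendsto_of_le_of_le'
      (g := fun ε : ℝ => A * B - ENNReal.ofReal ε * (B * ENNReal.ofReal c0))
      (h := fun ε : ℝ => A * B + ENNReal.ofReal ε * (B * ENNReal.ofReal c0))
    · have h4 := ENNReal.Tendsto.sub
        (tendsto_const_nhds : Tendsto (fun _ : ℝ => A * B) (𝓝[>] (0:ℝ)) (𝓝 (A * B)))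
        htend0 (Or.inl hABfin)
      simpa using h4
    · have h5 := Tendsto.add
        (tendsto_const_nhds : Tendsto (fun _ : ℝ => A * B) (𝓝[>] (0:ℝ)) (𝓝 (A * B)))
        htend0
      simpa using h5
    · filter_upwards [self_mem_nhdsWithin] with ε (hε : 0 < ε)
      exact tsub_le_iff_right.mpr (hlower ε hε)
    · filter_upwards [self_mem_nhdsWithin] with ε (hε : 0 < ε)
      exact hupper ε hε
  have hcongr : ∀ᶠ ε in 𝓝[>] (0:ℝ),
      eLpNorm (fun x => f x * Complex.ofReal (ε ^ (1/p) * φ (ε * x)))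
        (ENNReal.ofReal p) volume = (I ε) ^ (1/p) := by
    filter_upwards [self_mem_nhdsWithin] with ε (hε : 0 < ε)
    rw [eLpNorm_eq_lintegral_rpow_enorm_toReal hq0 hqt, hqr]
    simp only [hIdef]
    congr 1
    apply lintegral_congr
    intro x
    have hcnn : (0:ℝ) ≤ ε ^ (1/p) * φ (ε * x) :=
      mul_nonneg (Real.rpow_nonneg hε.le _) (hφnn _)
    have h6 : (ε ^ (1/p) * φ (ε * x)) ^ p = ε * ψ (ε * x) := by
      rw [Real.mul_rpow (Real.rpow_nonneg hε.le _) (hφnn _), ← Real.rpow_mul hε.le,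
        one_div_mul_cancel (ne_of_gt hp), Real.rpow_one]
    simp only [enorm_eq_nnnorm]
    rw [nnnorm_mul, Complex.nnnorm_real, ENNReal.coe_mul,
      ENNReal.mul_rpow_of_nonneg _ _ hp.le, ← enorm_eq_nnnorm (ε ^ (1/p) * φ (ε * x)), Real.enorm_eq_ofReal_abs,
      abs_of_nonneg hcnn, ENNReal.ofReal_rpow_of_nonneg hcnn hp.le, h6]
  rw [heLpφ, heLpf, ← ENNReal.mul_rpow_of_nonneg A B (by positivity : (0:ℝ) ≤ 1/p)]
  have hfinal : Tendsto (fun ε : ℝ => (I ε) ^ (1/p)) (𝓝[>] (0:ℝ)) (𝓝 ((A * B) ^ (1/p))) :=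
    ((ENNReal.continuous_rpow_const (y := 1/p)).tendsto (A * B)).comp hmain
  exact Tendsto.congr' (EventuallyEq.symm hcongr) hfinal
end

section
/- Let m₁ : ℝ → ℂ be a bounded measurable regulated function on ℝ and α ∈ ℝ. Define m_α(x,y) = m₁(x + αy) on ℝ². Let G(t,s) = π⁻¹ e^{-(t²+s²)}. Then for every (x,y) ∈ ℝ², lim_{ε→0⁺} ∫_{ℝ²} m_α(x - εt, y - εs) G(t,s) dt ds = m_α(x,y); i.e., m_α is G-regulated. The key identity is ∫_{ℝ²} m₁(x + αy - ε(t + αs)) G(t,s) dt ds = ∫_ℝ m₁(x + αy - εt) ψ_α(t) dt where ψ_α(t) = ∫_ℝ G(t - αs, s) ds. -/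
open MeasureTheory Filter Set
open scoped ENNReal NNReal Topology

section auxStmt18
open Real

lemma aux_psi_eq (α t : ℝ) :
    ∫ s : ℝ, Real.pi⁻¹ * Real.exp (-((t - α * s) ^ 2 + s ^ 2))
      = Real.pi⁻¹ * Real.sqrt (Real.pi / (1 + α ^ 2)) * Real.exp (-(t ^ 2 / (1 + α ^ 2))) := by
  have hβ : (0:ℝ) < 1 + α ^ 2 := by positivity
  set β : ℝ := 1 + α ^ 2 with hβdef
  have h1 : ∀ s : ℝ, -((t - α * s) ^ 2 + s ^ 2)
      = -(β * (s - α * t / β) ^ 2) + -(t ^ 2 / β) := by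
    intro s
    field_simp
    ring
  have h2 : ∀ s : ℝ, Real.pi⁻¹ * Real.exp (-((t - α * s) ^ 2 + s ^ 2))
      = (Real.pi⁻¹ * Real.exp (-(t ^ 2 / β))) * Real.exp (-β * (s - α * t / β) ^ 2) := by
    intro s
    rw [h1 s, Real.exp_add]
    ring_nf
  simp_rw [h2]
  rw [MeasureTheory.integral_const_mul]
  rw [integral_sub_right_eq_self (fun s => Real.exp (-β * s ^ 2)) (α * t / β)]
  rw [integral_gaussian]
  ring


lemma aux_tail (β : ℝ) (hβ : 0 < β) (a : ℝ) :
    ∫ r in Ioi a, 2 * r / β * Real.exp (-(r ^ 2 / β)) = Real.exp (-(a ^ 2 / β)) := by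
  have hderiv : ∀ x : ℝ, HasDerivAt (fun r : ℝ => -Real.exp (-(r ^ 2 / β)))
      (2 * x / β * Real.exp (-(x ^ 2 / β))) x := by
    intro x
    have h1 : HasDerivAt (fun r : ℝ => -(r ^ 2 / β)) (-(2 * x / β)) x := by
      simpa using (((hasDerivAt_pow 2 x).div_const β).fun_neg)
    have := (h1.exp).fun_neg
    refine this.congr_deriv ?_
    ring
  have hint : IntegrableOn (fun r : ℝ => 2 * r / β * Real.exp (-(r ^ 2 / β))) (Ioi a) := by
    have h0 : (0:ℝ) < β⁻¹ := by positivity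
    have := (integrable_mul_exp_neg_mul_sq h0).const_mul (2 / β)
    refine (this.congr ?_).integrableOn
    apply Filter.Eventually.of_forall
    intro x
    show 2 / β * (x * rexp (-β⁻¹ * x ^ 2)) = 2 * x / β * rexp (-(x ^ 2 / β))
    rw [show -β⁻¹ * x ^ 2 = -(x ^ 2 / β) by field_simp]
    ring
  have htend : Tendsto (fun r : ℝ => -Real.exp (-(r ^ 2 / β))) atTop (𝓝 0) := by
    rw [show (0:ℝ) = -0 by ring]
    apply Tendsto.neg
    apply Real.tendsto_exp_atBot.comp
    apply tendsto_neg_atTop_atBot.comp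
    exact (tendsto_pow_atTop (two_ne_zero)).atTop_div_const hβ
  have := MeasureTheory.integral_Ioi_of_hasDerivAt_of_tendsto'
    (f := fun r : ℝ => -Real.exp (-(r ^ 2 / β)))
    (fun x _ => hderiv x) hint htend
  rw [this]
  ring

lemma aux_sq_int (β : ℝ) (hβ : 0 < β) :
    Integrable (fun r : ℝ => r ^ 2 * Real.exp (-(r ^ 2 / β))) := by
  have h0 : (0:ℝ) < β⁻¹ := by positivity
  have := integrable_rpow_mul_exp_neg_mul_sq h0 (s := 2) (by norm_num)
  refine this.congr (Filter.Eventually.of_forall fun x => ?_)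
  show x ^ (2:ℝ) * rexp (-β⁻¹ * x ^ 2) = x ^ 2 * rexp (-(x ^ 2 / β))
  rw [show (2:ℝ) = ((2:ℕ):ℝ) by norm_num, Real.rpow_natCast,
    show -β⁻¹ * x ^ 2 = -(x ^ 2 / β) by field_simp]


lemma aux_layer (β : ℝ) (hβ : 0 < β) (c : ℝ) (hc : 0 ≤ c)
    (h : ℝ → ℂ) (hmeas : Measurable h) (M : ℝ) (hM : ∀ x, ‖h x‖ ≤ M) :
    ∫ t : ℝ, h t * Complex.ofReal (c * Real.exp (-(t ^ 2 / β)))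
      = ∫ r in Ioi (0:ℝ),
          Complex.ofReal (c * (2 * r / β * Real.exp (-(r ^ 2 / β)))) * ∫ t in Ioo (-r) r, h t := by
  have hM0 : 0 ≤ M := le_trans (norm_nonneg _) (hM 0)
  set g : ℝ → ℝ := fun r => 2 * r / β * Real.exp (-(r ^ 2 / β)) with hg
  set S : Set (ℝ × ℝ) := {q : ℝ × ℝ | |q.1| < q.2} with hS
  have hSm : MeasurableSet S := measurableSet_lt (by fun_prop) measurable_snd
  set F : ℝ × ℝ → ℂ := S.indicator (fun q => h q.1 * Complex.ofReal (c * g q.2)) with hF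
  have hFmeas : Measurable F :=
    Measurable.indicator ((hmeas.comp measurable_fst).mul (by fun_prop)) hSm
  have hsec_t : ∀ t : ℝ, (fun r => F (t, r))
      = (Ioi |t|).indicator (fun r => h t * Complex.ofReal (c * g r)) := by
    intro t; funext r
    rw [hF]
    by_cases hr : |t| < r
    · simp only [Set.indicator_of_mem (show (t, r) ∈ S from hr),
        Set.indicator_of_mem (show r ∈ Ioi |t| from hr)]
    · rw [Set.indicator_of_notMem (show (t, r) ∉ S from hr),
        Set.indicator_of_notMem (show r ∉ Ioi |t| from hr)]
  have hsec_r : ∀ r : ℝ, (fun t => F (t, r))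
      = (Ioo (-r) r).indicator (fun t => h t * Complex.ofReal (c * g r)) := by
    intro r; funext t
    rw [hF]
    by_cases ht : |t| < r
    · simp only [Set.indicator_of_mem (show (t, r) ∈ S from ht),
        Set.indicator_of_mem (mem_Ioo.mpr (abs_lt.mp ht))]
    · rw [Set.indicator_of_notMem (show (t, r) ∉ S from ht),
        Set.indicator_of_notMem (fun hmem => ht (abs_lt.mpr (mem_Ioo.mp hmem)))]
  have step1 : ∀ t : ℝ, h t * Complex.ofReal (c * Real.exp (-(t ^ 2 / β)))
      = ∫ r : ℝ, F (t, r) := by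
    intro t
    have e0 : ∫ r in Ioi |t|, c * g r = c * Real.exp (-(t ^ 2 / β)) := by
      rw [MeasureTheory.integral_const_mul, aux_tail β hβ |t|, sq_abs]
    have e1 : (∫ r in Ioi |t|, Complex.ofReal (c * g r))
        = Complex.ofReal (∫ r in Ioi |t|, c * g r) := integral_ofReal
    rw [hsec_t t, integral_indicator measurableSet_Ioi, MeasureTheory.integral_const_mul,
      e1, e0]
  have hIoo_vol : ∀ r : ℝ, (volume (Ioo (-r) r)).toReal ≤ 2 * |r| := by
    intro r
    rw [Real.volume_Ioo]
    rcases le_or_gt (r - -r) 0 with hle | hlt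
    · rw [ENNReal.ofReal_eq_zero.mpr hle]
      simpa using by positivity
    · rw [ENNReal.toReal_ofReal hlt.le]
      have := le_abs_self r
      linarith
  have hgabs : ∀ r : ℝ, |g r| = 2 * |r| / β * Real.exp (-(r ^ 2 / β)) := by
    intro r
    rw [hg]
    show |2 * r / β * rexp (-(r ^ 2 / β))| = _
    rw [abs_mul, abs_of_pos (Real.exp_pos _), abs_div, abs_of_pos hβ, abs_mul, abs_two]
  have hFint : Integrable F (volume.prod volume) := by
    have hFaesm : AEStronglyMeasurable F (volume.prod volume) := by
      rw [← Measure.volume_eq_prod]; exact hFmeas.aestronglyMeasurable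
    rw [integrable_prod_iff' hFaesm]
    have e1 : ∀ r : ℝ, (fun t => ‖F (t, r)‖)
        = (Ioo (-r) r).indicator (fun t => ‖h t * Complex.ofReal (c * g r)‖) := by
      intro r; funext t
      rw [show F (t, r) = (Ioo (-r) r).indicator
          (fun t => h t * Complex.ofReal (c * g r)) t from congrFun (hsec_r r) t]
      exact norm_indicator_eq_indicator_norm _ _
    constructor
    · refine Filter.Eventually.of_forall fun r => ?_
      rw [hsec_r r]
      refine (Measure.integrableOn_of_bounded (measure_Ioo_lt_top).ne
        ((hmeas.mul measurable_const).aestronglyMeasurable) (M := M * ‖(c * g r : ℝ)‖)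
        ?_).integrable_indicator measurableSet_Ioo
      refine Filter.Eventually.of_forall fun t => ?_
      rw [Pi.mul_apply, norm_mul, Complex.norm_real, norm_mul]
      exact mul_le_mul_of_nonneg_right (hM t) (by positivity)
    · refine Integrable.mono' ((aux_sq_int β hβ).const_mul (M * c * (2 / β) * 2)) ?_ ?_
      · exact ((hFaesm.norm).comp_quasiMeasurePreserving
          Measure.measurePreserving_swap.quasiMeasurePreserving).integral_prod_right'
      · refine Filter.Eventually.of_forall fun r => ?_
        have hnn : (0:ℝ) ≤ ∫ t : ℝ, ‖F (t, r)‖ := integral_nonneg fun t => norm_nonneg _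
        rw [Real.norm_of_nonneg hnn]
        rw [e1 r, integral_indicator measurableSet_Ioo]
        calc ∫ t in Ioo (-r) r, ‖h t * Complex.ofReal (c * g r)‖
            ≤ ‖∫ t in Ioo (-r) r, ‖h t * Complex.ofReal (c * g r)‖‖ := le_abs_self _
          _ ≤ (M * (c * |g r|)) * (volume (Ioo (-r) r)).toReal := by
              refine norm_setIntegral_le_of_norm_le_const measure_Ioo_lt_top ?_
              intro t _
              rw [Real.norm_of_nonneg (norm_nonneg _), norm_mul, Complex.norm_real,
                Real.norm_eq_abs, abs_mul, abs_of_nonneg hc]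
              exact mul_le_mul (hM t) le_rfl (by positivity) hM0
          _ ≤ (M * (c * |g r|)) * (2 * |r|) := by
              refine mul_le_mul_of_nonneg_left (hIoo_vol r) (by positivity)
          _ = M * c * (2 / β) * 2 * (r ^ 2 * Real.exp (-(r ^ 2 / β))) := by
              rw [hgabs r, ← sq_abs r]
              ring
  have hFint' : Integrable (Function.uncurry fun t r => F (t, r)) (volume.prod volume) := by
    exact hFint
  calc ∫ t : ℝ, h t * Complex.ofReal (c * Real.exp (-(t ^ 2 / β)))
      = ∫ t : ℝ, ∫ r : ℝ, F (t, r) := by simp_rw [step1]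
    _ = ∫ r : ℝ, ∫ t : ℝ, F (t, r) := MeasureTheory.integral_integral_swap hFint'
    _ = ∫ r : ℝ, Complex.ofReal (c * g r) * ∫ t in Ioo (-r) r, h t := by
        refine integral_congr_ae (Filter.Eventually.of_forall fun r => ?_)
        show (∫ t : ℝ, F (t, r)) = Complex.ofReal (c * g r) * ∫ t in Ioo (-r) r, h t
        rw [hsec_r r, integral_indicator measurableSet_Ioo, MeasureTheory.integral_mul_const,
          mul_comm]
    _ = ∫ r in Ioi (0:ℝ), Complex.ofReal (c * g r) * ∫ t in Ioo (-r) r, h t := by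
        refine (setIntegral_eq_integral_of_forall_compl_eq_zero fun r hr => ?_).symm
        have hre : Ioo (-r) r = (∅ : Set ℝ) := by
          apply Ioo_eq_empty
          simp only [mem_Ioi, not_lt] at hr
          intro hlt; linarith
        rw [hre]
        simp

lemma aux_norm_one (β : ℝ) (hβ : 0 < β) (c : ℝ) (hc : 0 ≤ c)
    (hc1 : c * Real.sqrt (Real.pi * β) = 1) :
    ∫ r in Ioi (0:ℝ), c * (2 * r / β * Real.exp (-(r ^ 2 / β))) * (2 * r) = 1 := by
  have L := aux_layer β hβ c hc (fun _ => 1) measurable_const 1 (by simp)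
  have lhs_eq : ∫ t : ℝ, (fun _ => (1:ℂ)) t * Complex.ofReal (c * Real.exp (-(t ^ 2 / β)))
      = Complex.ofReal (c * Real.sqrt (Real.pi * β)) := by
    simp_rw [one_mul]
    have e1 : (∫ t : ℝ, Complex.ofReal (c * Real.exp (-(t ^ 2 / β))))
        = Complex.ofReal (∫ t : ℝ, c * Real.exp (-(t ^ 2 / β))) := integral_ofReal
    rw [e1, MeasureTheory.integral_const_mul]
    congr 1
    have e2 : ∀ t : ℝ, -(t ^ 2 / β) = -β⁻¹ * t ^ 2 := by intro t; field_simp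
    simp_rw [e2]
    rw [integral_gaussian]
    rw [show Real.pi / β⁻¹ = Real.pi * β by field_simp]
  have rhs_eq : (∫ r in Ioi (0:ℝ),
        Complex.ofReal (c * (2 * r / β * Real.exp (-(r ^ 2 / β)))) * ∫ t in Ioo (-r) r, (fun _ => (1:ℂ)) t)
      = Complex.ofReal (∫ r in Ioi (0:ℝ), c * (2 * r / β * Real.exp (-(r ^ 2 / β))) * (2 * r)) := by
    have e3 : ∀ r ∈ Ioi (0:ℝ),
        Complex.ofReal (c * (2 * r / β * Real.exp (-(r ^ 2 / β)))) * (∫ t in Ioo (-r) r, (fun _ => (1:ℂ)) t)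
        = Complex.ofReal (c * (2 * r / β * Real.exp (-(r ^ 2 / β))) * (2 * r)) := by
      intro r hr
      have hr0 : (0:ℝ) < r := hr
      rw [setIntegral_const, measureReal_def, Real.volume_Ioo,
        show r - -r = 2 * r by ring, ENNReal.toReal_ofReal (by positivity : (0:ℝ) ≤ 2 * r)]
      rw [Complex.real_smul, mul_one, Complex.ofReal_mul]
      push_cast
      ring
    rw [setIntegral_congr_fun measurableSet_Ioi e3]
    exact integral_ofReal
  rw [lhs_eq, rhs_eq] at L
  have := Complex.ofReal_injective L
  rw [← this]
  exact hc1

lemma aux_G2_int (α : ℝ) :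
    Integrable (fun p : ℝ × ℝ => Real.exp (-((p.1 - α * p.2) ^ 2 + p.2 ^ 2))) volume := by
  have hcont : Continuous fun p : ℝ × ℝ => Real.exp (-((p.1 - α * p.2) ^ 2 + p.2 ^ 2)) := by
    fun_prop
  rw [Measure.volume_eq_prod]
  rw [integrable_prod_iff' hcont.aestronglyMeasurable]
  constructor
  · refine Filter.Eventually.of_forall fun s => ?_
    have e : ∀ t : ℝ, Real.exp (-((t - α * s) ^ 2 + s ^ 2))
        = Real.exp (-(s ^ 2)) * Real.exp (-1 * (t - α * s) ^ 2) := by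
      intro t
      rw [← Real.exp_add]
      congr 1
      ring
    simp_rw [e]
    exact (((integrable_exp_neg_mul_sq one_pos).comp_sub_right (α * s)).const_mul _)
  · have e : (fun s : ℝ => ∫ t : ℝ, ‖Real.exp (-((t - α * s) ^ 2 + s ^ 2))‖)
        = fun s : ℝ => Real.sqrt (Real.pi / 1) * Real.exp (-1 * s ^ 2) := by
      funext s
      have e0 : ∀ t : ℝ, ‖Real.exp (-((t - α * s) ^ 2 + s ^ 2))‖
          = Real.exp (-1 * s ^ 2) * Real.exp (-1 * (t - α * s) ^ 2) := by
        intro t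
        rw [Real.norm_of_nonneg (Real.exp_pos _).le, ← Real.exp_add]
        congr 1
        ring
      simp_rw [e0]
      rw [MeasureTheory.integral_const_mul,
        integral_sub_right_eq_self (fun t => Real.exp (-1 * t ^ 2)) (α * s),
        integral_gaussian]
      ring
    rw [e]
    exact (integrable_exp_neg_mul_sq one_pos).const_mul _


lemma aux_part2 (m₁ : ℝ → ℂ) (hm : Measurable m₁) (M : ℝ) (hM : ∀ x, ‖m₁ x‖ ≤ M)
    (α c₀ ε : ℝ) :
    ∫ z : ℝ × ℝ, m₁ (c₀ - ε * (z.1 + α * z.2)) *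
        Complex.ofReal (Real.pi⁻¹ * Real.exp (-(z.1 ^ 2 + z.2 ^ 2)))
      = ∫ t : ℝ, m₁ (c₀ - ε * t) *
          Complex.ofReal (∫ s : ℝ, Real.pi⁻¹ * Real.exp (-((t - α * s) ^ 2 + s ^ 2))) := by
  have hM0 : 0 ≤ M := le_trans (norm_nonneg _) (hM 0)
  set B : ℝ × ℝ → ℂ := fun p => m₁ (c₀ - ε * p.1) *
      Complex.ofReal (Real.pi⁻¹ * Real.exp (-((p.1 - α * p.2) ^ 2 + p.2 ^ 2))) with hB
  have hBmeas : Measurable B := by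
    apply Measurable.mul
    · exact hm.comp (by fun_prop)
    · fun_prop
  have hBint : Integrable B volume := by
    refine Integrable.mono' (((aux_G2_int α).const_mul (M * Real.pi⁻¹))) hBmeas.aestronglyMeasurable
      (Filter.Eventually.of_forall fun p => ?_)
    rw [hB]
    simp only
    rw [norm_mul, Complex.norm_real, Real.norm_eq_abs, abs_mul,
      abs_of_pos (Real.exp_pos _), abs_of_nonneg (by positivity : (0:ℝ) ≤ Real.pi⁻¹)]
    calc ‖m₁ (c₀ - ε * p.1)‖ * (Real.pi⁻¹ * Real.exp (-((p.1 - α * p.2) ^ 2 + p.2 ^ 2)))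
        ≤ M * (Real.pi⁻¹ * Real.exp (-((p.1 - α * p.2) ^ 2 + p.2 ^ 2))) := by
          exact mul_le_mul_of_nonneg_right (hM _) (by positivity)
      _ = M * Real.pi⁻¹ * Real.exp (-((p.1 - α * p.2) ^ 2 + p.2 ^ 2)) := by ring
  -- measure preserving shear
  have he' : MeasurePreserving (fun p : ℝ × ℝ => (p.1, p.2 + α * p.1))
      ((volume : Measure ℝ).prod volume) ((volume : Measure ℝ).prod volume) := by
    exact MeasurePreserving.skew_product (μb := (volume : Measure ℝ))
      (μd := (volume : Measure ℝ)) (g := fun a c => c + α * a)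
      (MeasurePreserving.id (volume : Measure ℝ))
      (measurable_snd.add (measurable_fst.const_mul α))
      (Filter.Eventually.of_forall fun a => map_add_right_eq_self volume (α * a))
  have he : MeasurePreserving (fun p : ℝ × ℝ => (p.1 + α * p.2, p.2))
      ((volume : Measure ℝ).prod volume) ((volume : Measure ℝ).prod volume) := by
    have h2 := (Measure.measurePreserving_swap.comp he').comp
      (Measure.measurePreserving_swap (μ := (volume : Measure ℝ)) (ν := (volume : Measure ℝ)))
    have hfe : ((Prod.swap ∘ fun p : ℝ × ℝ => (p.1, p.2 + α * p.1)) ∘ Prod.swap)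
        = (fun p : ℝ × ℝ => (p.1 + α * p.2, p.2)) := by
      funext p
      simp [Function.comp]
    rwa [hfe] at h2
  have heV : MeasurePreserving (fun p : ℝ × ℝ => (p.1 + α * p.2, p.2))
      (volume : Measure (ℝ × ℝ)) (volume : Measure (ℝ × ℝ)) := by
    rw [Measure.volume_eq_prod]; exact he
  -- change of variables
  have hcomp : (∫ z : ℝ × ℝ, m₁ (c₀ - ε * (z.1 + α * z.2)) *
      Complex.ofReal (Real.pi⁻¹ * Real.exp (-(z.1 ^ 2 + z.2 ^ 2))))
      = ∫ z : ℝ × ℝ, B ((fun p : ℝ × ℝ => (p.1 + α * p.2, p.2)) z) := by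
    refine integral_congr_ae (Filter.Eventually.of_forall fun z => ?_)
    rw [hB]
    simp only
    rw [show z.1 + α * z.2 - α * z.2 = z.1 by ring]
  have hmap : (∫ z : ℝ × ℝ, B ((fun p : ℝ × ℝ => (p.1 + α * p.2, p.2)) z)) = ∫ z : ℝ × ℝ, B z := by
    calc (∫ z : ℝ × ℝ, B ((fun p : ℝ × ℝ => (p.1 + α * p.2, p.2)) z))
        = ∫ z, B z ∂(Measure.map (fun p : ℝ × ℝ => (p.1 + α * p.2, p.2)) volume) := by
          rw [integral_map heV.measurable.aemeasurable]
          rw [heV.map_eq]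
          exact hBmeas.aestronglyMeasurable
      _ = ∫ z : ℝ × ℝ, B z := by rw [heV.map_eq]
  rw [hcomp, hmap]
  -- Fubini
  have hBint' : Integrable B ((volume : Measure ℝ).prod volume) := by
    rw [← Measure.volume_eq_prod]; exact hBint
  rw [Measure.volume_eq_prod, MeasureTheory.integral_prod B hBint']
  refine integral_congr_ae (Filter.Eventually.of_forall fun t => ?_)
  rw [hB]
  simp only
  rw [MeasureTheory.integral_const_mul]
  congr 1
  exact integral_ofReal

end auxStmt18

theorem stmt18 (m₁ : ℝ → ℂ) (hm : Measurable m₁) (hb : ∃ M : ℝ, ∀ x, ‖m₁ x‖ ≤ M)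
    (hreg : ∀ u : ℝ, Tendsto (fun ε : ℝ => (2 * ε)⁻¹ • ∫ t in (-ε)..ε, m₁ (u + t))
      (𝓝[>] 0) (𝓝 (m₁ u)))
    (α : ℝ) :
    (∀ x y : ℝ, Tendsto (fun ε : ℝ =>
        ∫ z : ℝ × ℝ, m₁ ((x - ε * z.1) + α * (y - ε * z.2)) *
          Complex.ofReal (Real.pi⁻¹ * Real.exp (-(z.1 ^ 2 + z.2 ^ 2))))
      (𝓝[>] 0) (𝓝 (m₁ (x + α * y)))) ∧
    (∀ x y ε : ℝ,
      ∫ z : ℝ × ℝ, m₁ (x + α * y - ε * (z.1 + α * z.2)) *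
          Complex.ofReal (Real.pi⁻¹ * Real.exp (-(z.1 ^ 2 + z.2 ^ 2)))
        = ∫ t : ℝ, m₁ (x + α * y - ε * t) *
            Complex.ofReal (∫ s : ℝ, Real.pi⁻¹ * Real.exp (-((t - α * s) ^ 2 + s ^ 2)))) := by
  obtain ⟨M, hMabs⟩ := hb
  have hM : ∀ x, ‖m₁ x‖ ≤ M := fun x => by exact hMabs x
  have hM0 : 0 ≤ M := le_trans (norm_nonneg _) (hM 0)
  have hβ : (0:ℝ) < 1 + α ^ 2 := by positivity
  constructor
  · intro x y
    set u : ℝ := x + α * y with hu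
    set c : ℝ := Real.pi⁻¹ * Real.sqrt (Real.pi / (1 + α ^ 2)) with hcdef
    have hc0 : 0 ≤ c := by rw [hcdef]; positivity
    have hc1 : c * Real.sqrt (Real.pi * (1 + α ^ 2)) = 1 := by
      rw [hcdef, mul_assoc, ← Real.sqrt_mul (by positivity),
        show Real.pi / (1 + α ^ 2) * (Real.pi * (1 + α ^ 2)) = Real.pi ^ 2 by field_simp,
        Real.sqrt_sq Real.pi_pos.le, inv_mul_cancel₀ Real.pi_ne_zero]
    -- interval integrability of the dilated functions
    have hii : ∀ (ε : ℝ) (a b : ℝ), IntervalIntegrable (fun t => m₁ (u - ε * t)) volume a b := by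
      intro ε a b
      constructor <;>
        exact Measure.integrableOn_of_bounded (measure_Ioc_lt_top).ne
          ((hm.comp (by fun_prop)).aestronglyMeasurable)
          (Filter.Eventually.of_forall fun t => hM _)
    -- key identity
    have key : ∀ ε : ℝ,
        (∫ z : ℝ × ℝ, m₁ ((x - ε * z.1) + α * (y - ε * z.2)) *
          Complex.ofReal (Real.pi⁻¹ * Real.exp (-(z.1 ^ 2 + z.2 ^ 2))))
        = ∫ r in Ioi (0:ℝ),
            Complex.ofReal (c * (2 * r / (1 + α ^ 2) * Real.exp (-(r ^ 2 / (1 + α ^ 2))))) *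
              ∫ t in (-r)..r, m₁ (u - ε * t) := by
      intro ε
      have harg : ∀ z : ℝ × ℝ, (x - ε * z.1) + α * (y - ε * z.2) = u - ε * (z.1 + α * z.2) := by
        intro z; rw [hu]; ring
      have e1 : (∫ z : ℝ × ℝ, m₁ ((x - ε * z.1) + α * (y - ε * z.2)) *
            Complex.ofReal (Real.pi⁻¹ * Real.exp (-(z.1 ^ 2 + z.2 ^ 2))))
          = ∫ z : ℝ × ℝ, m₁ (u - ε * (z.1 + α * z.2)) *
            Complex.ofReal (Real.pi⁻¹ * Real.exp (-(z.1 ^ 2 + z.2 ^ 2))) :=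
        integral_congr_ae (Filter.Eventually.of_forall fun z => by simp only [harg z])
      rw [e1, aux_part2 m₁ hm M hM α u ε]
      have e2 : ∀ t : ℝ, (∫ s : ℝ, Real.pi⁻¹ * Real.exp (-((t - α * s) ^ 2 + s ^ 2)))
          = c * Real.exp (-(t ^ 2 / (1 + α ^ 2))) := by
        intro t; rw [aux_psi_eq α t, hcdef]
      simp_rw [e2]
      rw [aux_layer (1 + α ^ 2) hβ c hc0 (fun t => m₁ (u - ε * t))
        (hm.comp (by fun_prop)) M (fun t => hM _)]
      refine setIntegral_congr_fun measurableSet_Ioi fun r hr => ?_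
      have hr0 : (0:ℝ) < r := hr
      rw [intervalIntegral.integral_of_le (by linarith : -r ≤ r), integral_Ioc_eq_integral_Ioo]
    simp only [key]
    have hlimit : ∫ r in Ioi (0:ℝ),
        Complex.ofReal (c * (2 * r / (1 + α ^ 2) * Real.exp (-(r ^ 2 / (1 + α ^ 2)))) * (2 * r)) *
          m₁ u = m₁ u := by
      rw [MeasureTheory.integral_mul_const]
      have e3 : (∫ r in Ioi (0:ℝ), Complex.ofReal
            (c * (2 * r / (1 + α ^ 2) * Real.exp (-(r ^ 2 / (1 + α ^ 2)))) * (2 * r)))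
          = Complex.ofReal (∫ r in Ioi (0:ℝ),
              c * (2 * r / (1 + α ^ 2) * Real.exp (-(r ^ 2 / (1 + α ^ 2)))) * (2 * r)) :=
        integral_ofReal
      rw [e3, aux_norm_one (1 + α ^ 2) hβ c hc0 hc1, Complex.ofReal_one, one_mul]
    rw [← hlimit]
    refine tendsto_integral_filter_of_dominated_convergence
      (fun r => c * (2 * r / (1 + α ^ 2) * Real.exp (-(r ^ 2 / (1 + α ^ 2)))) * (2 * r) * M)
      ?_ ?_ ?_ ?_
    · -- measurability
      refine Filter.Eventually.of_forall fun ε => ?_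
      have hprim := intervalIntegral.continuous_primitive (hii ε) 0
      have hsplit : (fun r : ℝ => ∫ t in (-r)..r, m₁ (u - ε * t))
          = fun r => (∫ t in (0:ℝ)..r, m₁ (u - ε * t)) - ∫ t in (0:ℝ)..(-r), m₁ (u - ε * t) := by
        funext r
        rw [← intervalIntegral.integral_add_adjacent_intervals (hii ε (-r) 0) (hii ε 0 r),
          intervalIntegral.integral_symm 0 (-r)]
        abel
      have hcont : Continuous fun r : ℝ => ∫ t in (-r)..r, m₁ (u - ε * t) := by
        rw [hsplit]; exact hprim.sub (hprim.comp continuous_neg)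
      exact ((Complex.continuous_ofReal.comp (by fun_prop)).mul hcont).aestronglyMeasurable.restrict
    · -- bound
      refine Filter.Eventually.of_forall fun ε => ?_
      refine (ae_restrict_iff' measurableSet_Ioi).2 (Filter.Eventually.of_forall fun r hr => ?_)
      have hr0 : (0:ℝ) < r := hr
      have hA : (0:ℝ) ≤ c * (2 * r / (1 + α ^ 2) * Real.exp (-(r ^ 2 / (1 + α ^ 2)))) := by
        positivity
      rw [norm_mul, Complex.norm_real, Real.norm_eq_abs, abs_of_nonneg hA]
      have hint : ‖∫ t in (-r)..r, m₁ (u - ε * t)‖ ≤ M * (2 * r) := by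
        have := intervalIntegral.norm_integral_le_of_norm_le_const
          (C := M) (a := -r) (b := r) (f := fun t => m₁ (u - ε * t))
          (fun t _ => hM _)
        rwa [show r - -r = 2 * r by ring, abs_of_pos (by positivity : (0:ℝ) < 2 * r)] at this
      calc c * (2 * r / (1 + α ^ 2) * Real.exp (-(r ^ 2 / (1 + α ^ 2)))) *
            ‖∫ t in (-r)..r, m₁ (u - ε * t)‖
          ≤ c * (2 * r / (1 + α ^ 2) * Real.exp (-(r ^ 2 / (1 + α ^ 2)))) * (M * (2 * r)) :=
            mul_le_mul_of_nonneg_left hint hA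
        _ = c * (2 * r / (1 + α ^ 2) * Real.exp (-(r ^ 2 / (1 + α ^ 2)))) * (2 * r) * M := by ring
    · -- bound integrable
      have e4 : (fun r : ℝ =>
            c * (2 * r / (1 + α ^ 2) * Real.exp (-(r ^ 2 / (1 + α ^ 2)))) * (2 * r) * M)
          = fun r => (4 * c * M / (1 + α ^ 2)) * (r ^ 2 * Real.exp (-(r ^ 2 / (1 + α ^ 2)))) := by
        funext r; ring
      rw [e4]
      exact ((aux_sq_int _ hβ).const_mul _).integrableOn
    · -- pointwise limit
      refine (ae_restrict_iff' measurableSet_Ioi).2 (Filter.Eventually.of_forall fun r hr => ?_)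
      have hr0 : (0:ℝ) < r := hr
      have h1 : Tendsto (fun ε : ℝ => ε * r) (𝓝[>] (0:ℝ)) (𝓝[>] (0:ℝ)) := by
        apply tendsto_nhdsWithin_of_tendsto_nhds_of_eventually_within
        · have hbase : Tendsto (fun ε : ℝ => ε * r) (𝓝 (0:ℝ)) (𝓝 (0 * r)) :=
            (continuous_id.mul continuous_const).tendsto 0
          rw [zero_mul] at hbase
          exact hbase.mono_left nhdsWithin_le_nhds
        · filter_upwards [self_mem_nhdsWithin] with ε hε
          exact mul_pos hε hr0
      have h2 := (hreg u).comp h1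
      have h3 : Tendsto (fun ε : ℝ =>
          Complex.ofReal (c * (2 * r / (1 + α ^ 2) * Real.exp (-(r ^ 2 / (1 + α ^ 2))))) *
            ((2 * r) • ((2 * (ε * r))⁻¹ • ∫ t in (-(ε * r))..(ε * r), m₁ (u + t))))
          (𝓝[>] (0:ℝ))
          (𝓝 (Complex.ofReal (c * (2 * r / (1 + α ^ 2) * Real.exp (-(r ^ 2 / (1 + α ^ 2))))) *
            ((2 * r) • m₁ u))) :=
        ((h2.const_smul ((2:ℝ) * r)).const_mul _)
      have hval : Complex.ofReal (c * (2 * r / (1 + α ^ 2) * Real.exp (-(r ^ 2 / (1 + α ^ 2))))) *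
            ((2 * r) • m₁ u)
          = Complex.ofReal (c * (2 * r / (1 + α ^ 2) * Real.exp (-(r ^ 2 / (1 + α ^ 2)))) * (2 * r)) *
            m₁ u := by
        rw [Complex.real_smul]
        push_cast
        ring
      rw [← hval]
      refine Tendsto.congr' ?_ h3
      filter_upwards [self_mem_nhdsWithin] with ε hε
      have hε0 : (0:ℝ) < ε := hε
      congr 1
      have sub1 : (∫ t in (-r)..r, m₁ (u - ε * t))
          = ε⁻¹ • ∫ t in (ε * (-r))..(ε * r), m₁ (u - t) :=
        intervalIntegral.integral_comp_mul_left (fun v => m₁ (u - v)) (ne_of_gt hε0)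
      have sub2 : (∫ t in (-(ε * r))..(ε * r), m₁ (u - t))
          = ∫ t in (-(ε * r))..(ε * r), m₁ (u + t) := by
        have h := intervalIntegral.integral_comp_neg (a := -(ε * r)) (b := ε * r)
          (fun v => m₁ (u + v))
        simp only [neg_neg] at h
        rw [← h]
        refine intervalIntegral.integral_congr fun t _ => ?_
        rw [sub_eq_add_neg]
      rw [smul_smul, show (2 * r) * (2 * (ε * r))⁻¹ = ε⁻¹ by
        field_simp, ← sub2, show -(ε * r) = ε * (-r) by ring, ← sub1]
  · intro x y ε
    exact aux_part2 m₁ hm M hM α (x + α * y) ε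
end
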